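/- arXiv:2510.03722 — 7 statements merged into one kernel-verified Lean document; each statement's English description precedes it below -/
import Mathlib

section
/- Let A be a real symmetric positive semidefinite d×d matrix, let λ > 0, u > 0, and b, γ ≥ 0, and let g : ℝ → ℝ satisfy, for every eigenvalue σ of A, |g(σ)·σ| ≤ b and |1 − g(σ)·σ|·σ^u ≤ γ·λ^u. Then ‖(g(A)·A − I)·(λI + A)^u‖ ≤ 2^u·(b + 1 + γ)·λ^u. -/
open Matrix MeasureTheory

open scoped Matrix.Norms.L2Operator

/-- The operator norm of a real `d × d` matrix induced by the Euclidean norm on `ℝ^d`. -/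
noncomputable def opNorm {d : ℕ} (A : Matrix (Fin d) (Fin d) ℝ) : ℝ :=
  ‖Matrix.toEuclideanCLM (𝕜 := ℝ) A‖

/-- The Euclidean norm `‖x‖₂` of a vector `x ∈ ℝ^d`. -/
noncomputable def enorm2 {d : ℕ} (x : Fin d → ℝ) : ℝ :=
  Real.sqrt (∑ i, x i ^ 2)

/-- Apply a scalar function to the eigenvalues of a symmetric matrix (continuous
functional calculus); junk value `0` if the matrix is not symmetric. -/
noncomputable def matFun {d : ℕ} (A : Matrix (Fin d) (Fin d) ℝ) (h : ℝ → ℝ) :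
    Matrix (Fin d) (Fin d) ℝ :=
  if hA : A.IsHermitian then
    (hA.eigenvectorUnitary : Matrix (Fin d) (Fin d) ℝ) *
      Matrix.diagonal (fun i => h (hA.eigenvalues i)) *
      star (hA.eigenvectorUnitary : Matrix (Fin d) (Fin d) ℝ)
  else 0

lemma contOn_finite {s : Set ℝ} (hs : s.Finite) (f : ℝ → ℝ) : ContinuousOn f s := by
  haveI := hs.to_subtype
  rw [continuousOn_iff_continuous_restrict]
  exact continuous_of_discreteTopology

lemma matFun_eq_cfc {d : ℕ} (A : Matrix (Fin d) (Fin d) ℝ) (hA : A.IsHermitian) (h : ℝ → ℝ) :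
    matFun A h = cfc h A := by
  rw [matFun, dif_pos hA, hA.cfc_eq, Matrix.IsHermitian.cfc]
  congr 1

lemma opNorm_diagonal_le {d : ℕ} (m : Fin d → ℝ) (C : ℝ) (hC : 0 ≤ C) (h : ∀ i, |m i| ≤ C) :
    ‖Matrix.toEuclideanCLM (𝕜 := ℝ) (Matrix.diagonal m)‖ ≤ C := by
  refine ContinuousLinearMap.opNorm_le_bound _ hC fun x => ?_
  have hx : ∀ z : EuclideanSpace ℝ (Fin d), ‖z‖ = Real.sqrt (∑ i, (z i)^2) := fun z => by
    rw [EuclideanSpace.norm_eq]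
    congr 1
    refine Finset.sum_congr rfl fun i _ => by rw [Real.norm_eq_abs, sq_abs]
  have happ : ∀ i, (Matrix.toEuclideanCLM (𝕜 := ℝ) (Matrix.diagonal m) x) i = m i * x i := by
    intro i
    have := congrFun (congrArg (fun z : Fin d → ℝ => z)
      (Matrix.ofLp_toEuclideanCLM (Matrix.diagonal m) x)) i
    simpa [Matrix.toLin'_apply, Matrix.mulVec_diagonal] using this
  rw [hx, hx]
  rw [← Real.sqrt_sq hC, ← Real.sqrt_mul (by positivity)]
  apply Real.sqrt_le_sqrt
  rw [Finset.mul_sum]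
  refine Finset.sum_le_sum fun i _ => ?_
  rw [happ, mul_pow]
  have : (m i)^2 ≤ C^2 := by
    rw [← sq_abs]
    exact pow_le_pow_left₀ (abs_nonneg _) (h i) 2
  nlinarith [sq_nonneg (x i)]

lemma scalar_bound (lam u b γ s gs : ℝ) (hlam : 0 < lam) (hu : 0 < u) (hb : 0 ≤ b) (hγ : 0 ≤ γ)
    (hs : 0 ≤ s) (h1 : |gs| ≤ b) (h2 : |1 - gs| * s ^ u ≤ γ * lam ^ u) :
    |(gs - 1) * (lam + s) ^ u| ≤ 2 ^ u * (b + 1 + γ) * lam ^ u := by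
  have hls : (0:ℝ) ≤ lam + s := by linarith
  have hpow : (0:ℝ) ≤ (lam + s) ^ u := Real.rpow_nonneg hls u
  have habs : |(gs - 1) * (lam + s) ^ u| = |gs - 1| * (lam + s) ^ u := by
    rw [abs_mul, abs_of_nonneg hpow]
  have hmax : (lam + s) ^ u ≤ 2 ^ u * (lam ^ u + s ^ u) := by
    have hle : lam + s ≤ 2 * max lam s := by
      rcases le_total lam s with h | h
      · rw [max_eq_right h]; linarith
      · rw [max_eq_left h]; linarith
    have hmn : (0:ℝ) ≤ max lam s := le_trans hlam.le (le_max_left _ _)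
    calc (lam + s) ^ u ≤ (2 * max lam s) ^ u := Real.rpow_le_rpow hls hle hu.le
      _ = 2 ^ u * (max lam s) ^ u := Real.mul_rpow (by norm_num) hmn
      _ ≤ 2 ^ u * (lam ^ u + s ^ u) := by
          apply mul_le_mul_of_nonneg_left _ (Real.rpow_nonneg (by norm_num) u)
          rcases le_total lam s with h | h
          · rw [max_eq_right h]
            nlinarith [Real.rpow_nonneg hlam.le u]
          · rw [max_eq_left h]
            nlinarith [Real.rpow_nonneg hs u]
  have hgs1 : |gs - 1| ≤ b + 1 := by
    calc |gs - 1| ≤ |gs| + 1 := by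
          simpa using abs_sub (gs) (1:ℝ)
      _ ≤ b + 1 := by linarith
  have h2' : |gs - 1| * s ^ u ≤ γ * lam ^ u := by rwa [abs_sub_comm] at h2
  have hlamu : (0:ℝ) ≤ lam ^ u := Real.rpow_nonneg hlam.le u
  have hsu : (0:ℝ) ≤ s ^ u := Real.rpow_nonneg hs u
  have h2u : (0:ℝ) ≤ 2 ^ u := Real.rpow_nonneg (by norm_num) u
  calc |(gs - 1) * (lam + s) ^ u| = |gs - 1| * (lam + s) ^ u := habs
    _ ≤ |gs - 1| * (2 ^ u * (lam ^ u + s ^ u)) :=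
        mul_le_mul_of_nonneg_left hmax (abs_nonneg _)
    _ = 2 ^ u * (|gs - 1| * lam ^ u + |gs - 1| * s ^ u) := by ring
    _ ≤ 2 ^ u * ((b + 1) * lam ^ u + γ * lam ^ u) := by
        apply mul_le_mul_of_nonneg_left _ h2u
        have := mul_le_mul_of_nonneg_right hgs1 hlamu
        linarith
    _ = 2 ^ u * (b + 1 + γ) * lam ^ u := by ring


/-- If `A` is PSD, `λ > 0`, `u > 0`, `b, γ ≥ 0` and the filter function `g`
satisfies `|g(σ)σ| ≤ b` and `|1 - g(σ)σ|·σ^u ≤ γ·λ^u` for every eigenvalue `σ` of `A`, then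
`‖(g(A)A - I)(λI + A)^u‖ ≤ 2^u (b + 1 + γ) λ^u`. -/
theorem statement0 {d : ℕ} (hd : 0 < d) (A : Matrix (Fin d) (Fin d) ℝ)
    (hA : A.PosSemidef) (lam u b γ : ℝ) (hlam : 0 < lam) (hu : 0 < u)
    (hb : 0 ≤ b) (hγ : 0 ≤ γ) (g : ℝ → ℝ)
    (hg1 : ∀ i : Fin d, |g (hA.1.eigenvalues i) * hA.1.eigenvalues i| ≤ b)
    (hg2 : ∀ i : Fin d,
      |1 - g (hA.1.eigenvalues i) * hA.1.eigenvalues i| * hA.1.eigenvalues i ^ u ≤ γ * lam ^ u) :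
    opNorm ((matFun A g * A - 1) * matFun (lam • (1 : Matrix (Fin d) (Fin d) ℝ) + A) (fun t => t ^ u)) ≤
      (2 : ℝ) ^ u * (b + 1 + γ) * lam ^ u := by
  have hH := hA.1
  have hsa : IsSelfAdjoint A := hH
  have hfin : (spectrum ℝ A).Finite := A.finite_real_spectrum
  have cA : ∀ f : ℝ → ℝ, ContinuousOn f (spectrum ℝ A) := fun f => contOn_finite hfin f
  have cA' : ∀ (f : ℝ → ℝ) (h : ℝ → ℝ), ContinuousOn f (h '' spectrum ℝ A) :=
    fun f h => contOn_finite (hfin.image h) f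
  set F : ℝ → ℝ := fun t => (g t * t - 1) * (lam + t) ^ u with hF
  -- the shifted matrix as cfc
  have hBsa : IsSelfAdjoint (lam • (1 : Matrix (Fin d) (Fin d) ℝ) + A) := by
    rw [_root_.IsSelfAdjoint, star_add, star_smul, star_one, star_trivial, hsa.star_eq]
  have hB : lam • (1 : Matrix (Fin d) (Fin d) ℝ) + A = cfc (fun t => lam + t) A := by
    have := cfc_const_add lam id A (cA id) hsa
    rw [cfc_id ℝ A hsa, Algebra.algebraMap_eq_smul_one] at this
    exact this.symm
  -- step A
  have hM1 : matFun A g * A - 1 = cfc (fun t => g t * t - 1) A := by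
    rw [matFun_eq_cfc A hH g]
    have e1 : cfc (fun t : ℝ => g t * t) A = cfc g A * cfc (id : ℝ → ℝ) A :=
      cfc_mul g id A (cA g) (cA id)
    rw [cfc_sub (fun t : ℝ => g t * t) (fun _ : ℝ => 1) A (cA _) (cA _), e1,
      cfc_id ℝ A hsa, cfc_const_one ℝ A]
  -- step B: shifted power
  have hM2 : matFun (lam • (1 : Matrix (Fin d) (Fin d) ℝ) + A) (fun t => t ^ u) =
      cfc (fun t : ℝ => (lam + t) ^ u) A := by
    rw [matFun_eq_cfc _ hBsa, hB,
      ← cfc_comp (fun t : ℝ => t ^ u) (fun t : ℝ => lam + t) A hsa (cA' _ _) (cA _)]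
    rfl
  have hprod : (matFun A g * A - 1) *
      matFun (lam • (1 : Matrix (Fin d) (Fin d) ℝ) + A) (fun t => t ^ u) = cfc F A := by
    rw [hM1, hM2, ← cfc_mul _ _ A (cA _) (cA _)]
  rw [hprod]
  -- now the norm bound
  have hC : (0:ℝ) ≤ 2 ^ u * (b + 1 + γ) * lam ^ u := by
    have h2u : (0:ℝ) ≤ 2 ^ u := Real.rpow_nonneg (by norm_num) u
    have hlamu : (0:ℝ) ≤ lam ^ u := Real.rpow_nonneg hlam.le u
    have : (0:ℝ) ≤ b + 1 + γ := by linarith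
    positivity
  have hcfc : cfc F A = hH.cfc F := hH.cfc_eq F
  rw [hcfc, Matrix.IsHermitian.cfc]
  have hUmem : (hH.eigenvectorUnitary : Matrix (Fin d) (Fin d) ℝ) ∈
      unitary (Matrix (Fin d) (Fin d) ℝ) := hH.eigenvectorUnitary.2
  have hbound : ∀ i, |(RCLike.ofReal ∘ F ∘ hH.eigenvalues) i| ≤ 2 ^ u * (b + 1 + γ) * lam ^ u := by
    intro i
    have hs : 0 ≤ hH.eigenvalues i := hA.eigenvalues_nonneg i
    simpa [hF, abs_mul] using scalar_bound lam u b γ (hH.eigenvalues i) (g (hH.eigenvalues i) * hH.eigenvalues i)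
      hlam hu hb hγ hs (hg1 i) (hg2 i)
  calc opNorm ((hH.eigenvectorUnitary : Matrix (Fin d) (Fin d) ℝ) *
        Matrix.diagonal (RCLike.ofReal ∘ F ∘ hH.eigenvalues) *
        star (hH.eigenvectorUnitary : Matrix (Fin d) (Fin d) ℝ))
      = ‖(hH.eigenvectorUnitary : Matrix (Fin d) (Fin d) ℝ) *
        (Matrix.diagonal (RCLike.ofReal ∘ F ∘ hH.eigenvalues) *
        star (hH.eigenvectorUnitary : Matrix (Fin d) (Fin d) ℝ))‖ := by
        rw [← mul_assoc]; rfl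
    _ = ‖Matrix.diagonal (RCLike.ofReal ∘ F ∘ hH.eigenvalues) *
        star (hH.eigenvectorUnitary : Matrix (Fin d) (Fin d) ℝ)‖ :=
        CStarRing.norm_mem_unitary_mul _ hUmem
    _ = ‖Matrix.diagonal (RCLike.ofReal ∘ F ∘ hH.eigenvalues)‖ :=
        CStarRing.norm_mul_mem_unitary _ (Unitary.star_mem hUmem)
    _ ≤ 2 ^ u * (b + 1 + γ) * lam ^ u :=
        opNorm_diagonal_le _ _ hC hbound
end

section
/- Let Σ and Σ̂ be real symmetric positive semidefinite d×d matrices, λ > 0, and 0 ≤ c̃ < 1/2. If ‖(Σ + λI)^{-1/2}·(Σ − Σ̂)·(Σ + λI)^{-1/2}‖ ≤ c̃, then ‖(Σ + λI)^{1/2}·(Σ̂ + λI)^{-1/2}‖ ≤ √(1/(1 − c̃)). -/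
open Matrix MeasureTheory RealInnerProductSpace
open scoped MatrixOrder

lemma matFun_sqrt_eq {d : ℕ} {A : Matrix (Fin d) (Fin d) ℝ} (hA : A.PosSemidef) :
    matFun A Real.sqrt = CFC.sqrt A := by
  rw [matFun, dif_pos hA.1, CFC.sqrt_eq_real_sqrt A hA.nonneg, cfcₙ_eq_cfc (hf0 := Real.sqrt_zero),
    hA.1.cfc_eq, IsHermitian.cfc, Unitary.conjStarAlgAut_apply]
  rfl

local notation "φ" => Matrix.toEuclideanCLM (𝕜 := ℝ)

lemma inner_map_symm {d : ℕ} {M : Matrix (Fin d) (Fin d) ℝ} (hM : M.IsHermitian)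
    (x y : EuclideanSpace ℝ (Fin d)) :
    ⟪φ M x, y⟫ = ⟪x, φ M y⟫ := by
  have h1 : star (φ M) = φ M := by
    rw [← map_star]
    congr 1
  rw [ContinuousLinearMap.star_eq_adjoint] at h1
  conv_lhs => rw [← h1]
  exact ContinuousLinearMap.adjoint_inner_left _ _ _

lemma inner_sq_map {d : ℕ} {M : Matrix (Fin d) (Fin d) ℝ} (hM : M.IsHermitian)
    (y : EuclideanSpace ℝ (Fin d)) :
    ⟪y, φ (M * M) y⟫ = ‖φ M y‖ ^ 2 := by
  rw [_root_.map_mul, ContinuousLinearMap.mul_apply, ← inner_map_symm hM,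
    real_inner_self_eq_norm_sq]

/-- If `Σ, Σ̂` are PSD, `λ > 0`, `0 ≤ c̃ < 1/2` and
`‖(Σ+λI)^{-1/2} (Σ - Σ̂) (Σ+λI)^{-1/2}‖ ≤ c̃`, then
`‖(Σ+λI)^{1/2} (Σ̂+λI)^{-1/2}‖ ≤ √(1/(1-c̃))`. -/
theorem statement1 {d : ℕ} (hd : 0 < d) (S Shat : Matrix (Fin d) (Fin d) ℝ)
    (hS : S.PosSemidef) (hShat : Shat.PosSemidef) (lam c : ℝ)
    (hlam : 0 < lam) (hc0 : 0 ≤ c) (hc : c < 1 / 2)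
    (h : opNorm ((matFun (S + lam • 1) Real.sqrt)⁻¹ * (S - Shat) *
        (matFun (S + lam • 1) Real.sqrt)⁻¹) ≤ c) :
    opNorm (matFun (S + lam • 1) Real.sqrt * (matFun (Shat + lam • 1) Real.sqrt)⁻¹) ≤
      Real.sqrt (1 / (1 - c)) := by
  have hc1 : (0:ℝ) < 1 - c := by linarith
  set A := S + lam • 1 with hAdef
  set B := Shat + lam • 1 with hBdef
  have hone : (lam • (1 : Matrix (Fin d) (Fin d) ℝ)).PosDef := by
    rw [Matrix.smul_one_eq_diagonal]
    exact Matrix.posDef_diagonal_iff.mpr fun _ => hlam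
  have hA : A.PosDef := Matrix.PosDef.posSemidef_add hS hone
  have hB : B.PosDef := Matrix.PosDef.posSemidef_add hShat hone
  set R := matFun A Real.sqrt with hRdef
  set T := matFun B Real.sqrt with hTdef
  have hReq : R = CFC.sqrt A := matFun_sqrt_eq hA.posSemidef
  have hTeq : T = CFC.sqrt B := matFun_sqrt_eq hB.posSemidef
  have hRpsd : R.PosSemidef := hReq ▸ (CFC.sqrt_nonneg A).posSemidef
  have hTpsd : T.PosSemidef := hTeq ▸ (CFC.sqrt_nonneg B).posSemidef
  have hR2 : R * R = A := by rw [hReq]; exact CFC.sqrt_mul_sqrt_self A hA.posSemidef.nonneg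
  have hT2 : T * T = B := by rw [hTeq]; exact CFC.sqrt_mul_sqrt_self B hB.posSemidef.nonneg
  have hdetR : IsUnit R.det := by
    have hm : R.det * R.det = A.det := by rw [← det_mul, hR2]
    refine isUnit_iff_ne_zero.mpr fun h0 => ?_
    rw [h0, mul_zero] at hm
    exact hA.det_pos.ne' hm.symm
  have hdetT : IsUnit T.det := by
    have hm : T.det * T.det = B.det := by rw [← det_mul, hT2]
    refine isUnit_iff_ne_zero.mpr fun h0 => ?_
    rw [h0, mul_zero] at hm
    exact hB.det_pos.ne' hm.symm
  have hRi : R⁻¹ * R = 1 := nonsing_inv_mul R hdetR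
  have hRi' : R * R⁻¹ = 1 := mul_nonsing_inv R hdetR
  have hTi' : T * T⁻¹ = 1 := mul_nonsing_inv T hdetT
  have hRinvH : (R⁻¹).IsHermitian := hRpsd.1.inv
  -- key quadratic inequality: (1-c) ⟪y, A y⟫ ≤ ⟪y, B y⟫
  have key : ∀ y : EuclideanSpace ℝ (Fin d),
      (1 - c) * ⟪y, φ A y⟫ ≤ ⟪y, φ B y⟫ := by
    intro y
    set z := φ R y with hz
    have hAy : ⟪y, φ A y⟫ = ⟪z, z⟫ := by
      rw [← hR2, inner_sq_map hRpsd.1, real_inner_self_eq_norm_sq]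
    have hy : φ R⁻¹ z = y := by
      rw [hz, ← ContinuousLinearMap.mul_apply, ← _root_.map_mul, hRi, _root_.map_one,
        ContinuousLinearMap.one_apply]
    have hBy : ⟪z, φ (R⁻¹ * B * R⁻¹) z⟫ = ⟪y, φ B y⟫ := by
      rw [_root_.map_mul, _root_.map_mul, ContinuousLinearMap.mul_apply,
        ContinuousLinearMap.mul_apply, hy, ← inner_map_symm hRinvH, hy]
    have hM0 : R⁻¹ * (S - Shat) * R⁻¹ = 1 - R⁻¹ * B * R⁻¹ := by
      have hSsub : S - Shat = A - B := by rw [hAdef, hBdef]; abel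
      have e1 : R⁻¹ * (A - B) * R⁻¹ = (R⁻¹ * R) * (R * R⁻¹) - R⁻¹ * B * R⁻¹ := by
        rw [← hR2]; noncomm_ring
      rw [hSsub, e1, hRi, hRi', one_mul]
    have hop : ‖φ ((1 - R⁻¹ * B * R⁻¹ : Matrix (Fin d) (Fin d) ℝ))‖ ≤ c := by
      rw [hM0] at h; exact h
    have hcs : ⟪z, z⟫ - ⟪y, φ B y⟫ ≤ c * ⟪z, z⟫ := by
      have h1 : ⟪z, φ (1 - R⁻¹ * B * R⁻¹) z⟫ = ⟪z, z⟫ - ⟪y, φ B y⟫ := by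
        rw [_root_.map_sub, ContinuousLinearMap.sub_apply, inner_sub_right, _root_.map_one,
          ContinuousLinearMap.one_apply, hBy]
      have h2 : ⟪z, φ (1 - R⁻¹ * B * R⁻¹) z⟫ ≤ c * ⟪z, z⟫ := by
        calc ⟪z, φ (1 - R⁻¹ * B * R⁻¹) z⟫ ≤ ‖z‖ * ‖φ (1 - R⁻¹ * B * R⁻¹) z‖ :=
              real_inner_le_norm _ _
          _ ≤ ‖z‖ * (‖φ ((1 - R⁻¹ * B * R⁻¹ : Matrix (Fin d) (Fin d) ℝ))‖ * ‖z‖) :=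
              mul_le_mul_of_nonneg_left (ContinuousLinearMap.le_opNorm _ _) (norm_nonneg z)
          _ ≤ ‖z‖ * (c * ‖z‖) :=
              mul_le_mul_of_nonneg_left
                (mul_le_mul_of_nonneg_right hop (norm_nonneg z)) (norm_nonneg z)
          _ = c * ⟪z, z⟫ := by rw [real_inner_self_eq_norm_mul_norm]; ring
      linarith [h1 ▸ h2]
    rw [hAy]
    linarith
  -- conclude the operator norm bound
  have hsq : (0:ℝ) ≤ Real.sqrt (1 / (1 - c)) := Real.sqrt_nonneg _
  refine ContinuousLinearMap.opNorm_le_bound _ hsq fun x => ?_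
  set y := φ T⁻¹ x with hy
  have happ : φ (R * T⁻¹) x = φ R y := by
    rw [_root_.map_mul, ContinuousLinearMap.mul_apply]
  have hxnorm : ⟪y, φ B y⟫ = ‖x‖ ^ 2 := by
    have hTx : φ T y = x := by
      rw [hy, ← ContinuousLinearMap.mul_apply, ← _root_.map_mul, hTi', _root_.map_one,
        ContinuousLinearMap.one_apply]
    rw [← hT2, inner_sq_map hTpsd.1, hTx]
  have hRy : ‖φ R y‖ ^ 2 = ⟪y, φ A y⟫ := by
    rw [← hR2, inner_sq_map hRpsd.1]
  have hfinal : ‖φ R y‖ ^ 2 ≤ (1 / (1 - c)) * ‖x‖ ^ 2 := by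
    rw [hRy, div_mul_eq_mul_div, one_mul, le_div_iff₀ hc1]
    calc ⟪y, φ A y⟫ * (1 - c) = (1 - c) * ⟪y, φ A y⟫ := by ring
      _ ≤ ⟪y, φ B y⟫ := key y
      _ = ‖x‖ ^ 2 := hxnorm
  rw [happ]
  calc ‖φ R y‖ = Real.sqrt (‖φ R y‖ ^ 2) := (Real.sqrt_sq (norm_nonneg _)).symm
    _ ≤ Real.sqrt ((1 / (1 - c)) * ‖x‖ ^ 2) := Real.sqrt_le_sqrt hfinal
    _ = Real.sqrt (1 / (1 - c)) * ‖x‖ := by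
        rw [Real.sqrt_mul (by positivity), Real.sqrt_sq (norm_nonneg x)]
end

section
/- Let Σ and Σ̂ be real symmetric positive semidefinite d×d matrices, λ > 0, and 0 ≤ c̃ < 1/2. If ‖(Σ + λI)^{-1/2}·(Σ − Σ̂)·(Σ + λI)^{-1/2}‖ ≤ c̃, then ‖(Σ̂ + λI)^{1/2}·(Σ + λI)^{-1/2}‖ ≤ √((1 − c̃)/(1 − 2c̃)). -/
open Matrix MeasureTheory

noncomputable def Matrix.PosSemidef.sqrt {d : ℕ} {A : Matrix (Fin d) (Fin d) ℝ}
    (hA : A.PosSemidef) : Matrix (Fin d) (Fin d) ℝ :=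
  (hA.1.eigenvectorUnitary : Matrix (Fin d) (Fin d) ℝ) *
    Matrix.diagonal (fun i => Real.sqrt (hA.1.eigenvalues i)) *
    star (hA.1.eigenvectorUnitary : Matrix (Fin d) (Fin d) ℝ)

lemma Matrix.PosSemidef.posSemidef_sqrt {d : ℕ} {A : Matrix (Fin d) (Fin d) ℝ}
    (hA : A.PosSemidef) : hA.sqrt.PosSemidef := by
  unfold Matrix.PosSemidef.sqrt
  have hD : (Matrix.diagonal (fun i => Real.sqrt (hA.1.eigenvalues i))).PosSemidef :=
    Matrix.posSemidef_diagonal_iff.mpr fun i => Real.sqrt_nonneg _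
  have := hD.mul_mul_conjTranspose_same (hA.1.eigenvectorUnitary : Matrix (Fin d) (Fin d) ℝ)
  simpa [Matrix.star_eq_conjTranspose] using this

lemma Matrix.PosSemidef.sqrt_mul_self {d : ℕ} {A : Matrix (Fin d) (Fin d) ℝ}
    (hA : A.PosSemidef) : hA.sqrt * hA.sqrt = A := by
  unfold Matrix.PosSemidef.sqrt
  set U := (hA.1.eigenvectorUnitary : Matrix (Fin d) (Fin d) ℝ)
  have hU : star U * U = 1 := Unitary.star_mul_self_of_mem hA.1.eigenvectorUnitary.2
  have hdd : Matrix.diagonal (fun i => Real.sqrt (hA.1.eigenvalues i)) *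
      Matrix.diagonal (fun i => Real.sqrt (hA.1.eigenvalues i)) =
      Matrix.diagonal (RCLike.ofReal ∘ hA.1.eigenvalues) := by
    rw [Matrix.diagonal_mul_diagonal]
    congr 1; funext i
    simp [Real.mul_self_sqrt (hA.eigenvalues_nonneg i)]
  calc U * Matrix.diagonal (fun i => Real.sqrt (hA.1.eigenvalues i)) * star U *
        (U * Matrix.diagonal (fun i => Real.sqrt (hA.1.eigenvalues i)) * star U)
      = U * (Matrix.diagonal (fun i => Real.sqrt (hA.1.eigenvalues i)) *
        Matrix.diagonal (fun i => Real.sqrt (hA.1.eigenvalues i))) * star U := by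
        simp only [Matrix.mul_assoc]
        rw [← Matrix.mul_assoc (star U) U, hU, Matrix.one_mul]
    _ = A := by
        rw [hdd]
        conv_rhs => rw [hA.1.spectral_theorem]
        simp [Unitary.conjStarAlgAut_apply, U]

lemma matFun_eq_sqrt {d : ℕ} {A : Matrix (Fin d) (Fin d) ℝ} (hA : A.PosSemidef) :
    matFun A Real.sqrt = hA.sqrt := by
  rw [matFun, dif_pos hA.isHermitian, Matrix.PosSemidef.sqrt]

/-- If `Σ, Σ̂` are PSD, `λ > 0`, `0 ≤ c̃ < 1/2` and
`‖(Σ+λI)^{-1/2} (Σ - Σ̂) (Σ+λI)^{-1/2}‖ ≤ c̃`, then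
`‖(Σ̂+λI)^{1/2} (Σ+λI)^{-1/2}‖ ≤ √((1-c̃)/(1-2c̃))`. -/
theorem statement2 {d : ℕ} (hd : 0 < d) (S Shat : Matrix (Fin d) (Fin d) ℝ)
    (hS : S.PosSemidef) (hShat : Shat.PosSemidef) (lam c : ℝ)
    (hlam : 0 < lam) (hc0 : 0 ≤ c) (hc : c < 1 / 2)
    (h : opNorm ((matFun (S + lam • 1) Real.sqrt)⁻¹ * (S - Shat) *
        (matFun (S + lam • 1) Real.sqrt)⁻¹) ≤ c) :
    opNorm (matFun (Shat + lam • 1) Real.sqrt * (matFun (S + lam • 1) Real.sqrt)⁻¹) ≤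
      Real.sqrt ((1 - c) / (1 - 2 * c)) := by
  haveI : Nonempty (Fin d) := ⟨⟨0, hd⟩⟩
  have hone : Matrix.PosDef (lam • (1 : Matrix (Fin d) (Fin d) ℝ)) := by
    rw [Matrix.smul_one_eq_diagonal]
    exact Matrix.posDef_diagonal_iff.mpr fun _ => hlam
  have hA : (S + lam • (1 : Matrix (Fin d) (Fin d) ℝ)).PosDef := Matrix.PosDef.posSemidef_add hS hone
  have hB : (Shat + lam • (1 : Matrix (Fin d) (Fin d) ℝ)).PosDef := Matrix.PosDef.posSemidef_add hShat hone
  have hmA : matFun (S + lam • 1) Real.sqrt = hA.posSemidef.sqrt := matFun_eq_sqrt _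
  have hmB : matFun (Shat + lam • 1) Real.sqrt = hB.posSemidef.sqrt := matFun_eq_sqrt _
  set R := hA.posSemidef.sqrt with hRdef
  set Q := hB.posSemidef.sqrt with hQdef
  have hRsq : R * R = S + lam • 1 := hA.posSemidef.sqrt_mul_self
  have hQsq : Q * Q = Shat + lam • 1 := hB.posSemidef.sqrt_mul_self
  have hRH : R.IsHermitian := hA.posSemidef.posSemidef_sqrt.isHermitian
  have hQH : Q.IsHermitian := hB.posSemidef.posSemidef_sqrt.isHermitian
  have hdet : IsUnit R.det := by
    have hmul : R.det * R.det = (S + lam • 1).det := by rw [← Matrix.det_mul, hRsq]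
    have h2 : (S + lam • (1 : Matrix (Fin d) (Fin d) ℝ)).det ≠ 0 := ne_of_gt hA.det_pos
    exact isUnit_iff_ne_zero.mpr fun h0 => h2 (by rw [← hmul, h0, zero_mul])
  have hRinv : R⁻¹ * R = 1 := Matrix.nonsing_inv_mul _ hdet
  have hRinv' : R * R⁻¹ = 1 := Matrix.mul_nonsing_inv _ hdet
  have hRinvH : (R⁻¹)ᴴ = R⁻¹ := by rw [Matrix.conjTranspose_nonsing_inv, hRH.eq]
  -- key matrix identity
  have h1 : R⁻¹ * ((S + lam • 1) * R⁻¹) = 1 := by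
    rw [← hRsq, Matrix.mul_assoc R R R⁻¹, hRinv', mul_one, hRinv]
  have key : (Q * R⁻¹)ᴴ * (Q * R⁻¹) = 1 - R⁻¹ * (S - Shat) * R⁻¹ := by
    have hsplit : Shat + lam • (1 : Matrix (Fin d) (Fin d) ℝ)
        = (S + lam • 1) - (S - Shat) := by abel
    calc (Q * R⁻¹)ᴴ * (Q * R⁻¹) = R⁻¹ * ((Q * Q) * R⁻¹) := by
          rw [Matrix.conjTranspose_mul, hRinvH, hQH.eq]
          simp only [Matrix.mul_assoc]
      _ = R⁻¹ * (((S + lam • 1) - (S - Shat)) * R⁻¹) := by rw [hQsq, hsplit]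
      _ = R⁻¹ * ((S + lam • 1) * R⁻¹) - R⁻¹ * ((S - Shat) * R⁻¹) := by
          rw [Matrix.sub_mul, Matrix.mul_sub]
      _ = 1 - R⁻¹ * (S - Shat) * R⁻¹ := by rw [h1, Matrix.mul_assoc]
  rw [hmA, hmB]
  rw [hmA] at h
  -- norm bound
  have hsq : opNorm (Q * R⁻¹) ^ 2 = opNorm ((Q * R⁻¹)ᴴ * (Q * R⁻¹)) := by
    unfold opNorm
    rw [← Matrix.star_eq_conjTranspose]
    rw [show Matrix.toEuclideanCLM (𝕜 := ℝ) (star (Q * R⁻¹) * (Q * R⁻¹))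
        = star (Matrix.toEuclideanCLM (𝕜 := ℝ) (Q * R⁻¹)) *
          Matrix.toEuclideanCLM (𝕜 := ℝ) (Q * R⁻¹) from by
      rw [_root_.map_mul, map_star]]
    rw [ContinuousLinearMap.star_eq_adjoint, sq]
    exact (ContinuousLinearMap.norm_adjoint_comp_self _).symm
  have htri : opNorm (1 - R⁻¹ * (S - Shat) * R⁻¹) ≤ 1 + c := by
    unfold opNorm at h ⊢
    rw [_root_.map_sub, _root_.map_one]
    refine (norm_sub_le _ _).trans ?_
    haveI : Nontrivial (EuclideanSpace ℝ (Fin d)) := by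
      refine ⟨EuclideanSpace.single ⟨0, hd⟩ (1 : ℝ), 0, fun hcon => ?_⟩
      have := congrFun (congrArg (WithLp.equiv 2 _) hcon) ⟨0, hd⟩
      simpa using this
    have h1n : ‖(1 : EuclideanSpace ℝ (Fin d) →L[ℝ] EuclideanSpace ℝ (Fin d))‖ = 1 := by
      rw [ContinuousLinearMap.one_def]
      exact ContinuousLinearMap.norm_id
    rw [h1n]
    linarith
  have hbound : opNorm (Q * R⁻¹) ^ 2 ≤ (1 - c) / (1 - 2 * c) := by
    have h2c : (0 : ℝ) < 1 - 2 * c := by linarith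
    have hle : (1 : ℝ) + c ≤ (1 - c) / (1 - 2 * c) := by
      rw [le_div_iff₀ h2c]; nlinarith
    calc opNorm (Q * R⁻¹) ^ 2 = opNorm ((Q * R⁻¹)ᴴ * (Q * R⁻¹)) := hsq
      _ = opNorm (1 - R⁻¹ * (S - Shat) * R⁻¹) := by rw [key]
      _ ≤ 1 + c := htri
      _ ≤ (1 - c) / (1 - 2 * c) := hle
  have hx0 : (0 : ℝ) ≤ opNorm (Q * R⁻¹) := norm_nonneg _
  have hy0 : (0 : ℝ) ≤ (1 - c) / (1 - 2 * c) := le_trans (sq_nonneg _) hbound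
  exact (Real.le_sqrt hx0 hy0).mpr hbound
end

section
/- Let Σ and Σ̂ be real symmetric positive semidefinite d×d matrices, λ > 0, b > 0, and 0 ≤ c̃ < 1/2 with ‖(Σ + λI)^{-1/2}·(Σ − Σ̂)·(Σ + λI)^{-1/2}‖ ≤ c̃. Let g : ℝ → ℝ satisfy, for every eigenvalue σ of Σ̂, |g(σ)| ≤ b/λ and |g(σ)·σ| ≤ b. Then ‖(Σ + λI)^{1/2}·g(Σ̂)·(Σ + λI)^{1/2}‖ ≤ 2b·√(1/(1 − 2c̃)). -/
open Matrix MeasureTheory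

section Helpers

open scoped RealInnerProductSpace

variable {d : ℕ} {A : Matrix (Fin d) (Fin d) ℝ}

lemma matFun_def (hA : A.IsHermitian) (f : ℝ → ℝ) : matFun A f =
    (hA.eigenvectorUnitary : Matrix (Fin d) (Fin d) ℝ) *
      Matrix.diagonal (fun i => f (hA.eigenvalues i)) *
      star (hA.eigenvectorUnitary : Matrix (Fin d) (Fin d) ℝ) := by
  rw [matFun, dif_pos hA]

lemma matFun_mul (hA : A.IsHermitian) (f g : ℝ → ℝ) :
    matFun A f * matFun A g = matFun A (fun x => f x * g x) := by
  rw [matFun_def hA f, matFun_def hA g, matFun_def hA]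
  have h1 : (star (hA.eigenvectorUnitary : Matrix (Fin d) (Fin d) ℝ)) *
      (hA.eigenvectorUnitary : Matrix (Fin d) (Fin d) ℝ) = 1 := Unitary.coe_star_mul_self _
  calc _ = (hA.eigenvectorUnitary : Matrix (Fin d) (Fin d) ℝ) *
      Matrix.diagonal (fun i => f (hA.eigenvalues i)) *
      ((star (hA.eigenvectorUnitary : Matrix (Fin d) (Fin d) ℝ)) *
      (hA.eigenvectorUnitary : Matrix (Fin d) (Fin d) ℝ)) *
      Matrix.diagonal (fun i => g (hA.eigenvalues i)) *
      star (hA.eigenvectorUnitary : Matrix (Fin d) (Fin d) ℝ) := by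
        simp only [Matrix.mul_assoc]
    _ = _ := by
        rw [h1, Matrix.mul_one,
          Matrix.mul_assoc _ (Matrix.diagonal _) (Matrix.diagonal _),
          Matrix.diagonal_mul_diagonal]

lemma matFun_congr (hA : A.IsHermitian) {f g : ℝ → ℝ}
    (h : ∀ i, f (hA.eigenvalues i) = g (hA.eigenvalues i)) :
    matFun A f = matFun A g := by
  rw [matFun_def hA, matFun_def hA]
  congr 2
  exact congrArg _ (funext h)

lemma matFun_one (hA : A.IsHermitian) {f : ℝ → ℝ} (h : ∀ i, f (hA.eigenvalues i) = 1) :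
    matFun A f = 1 := by
  rw [matFun_congr hA (g := fun _ => 1) h, matFun_def hA]
  simp only [Matrix.diagonal_one, Matrix.mul_one]
  exact Unitary.coe_mul_star_self _

lemma matFun_id (hA : A.IsHermitian) : matFun A (fun x => x) = A := by
  rw [matFun_def hA]
  convert (hA.spectral_theorem).symm using 3
  rfl

lemma matFun_smul_one (hA : A.IsHermitian) (lam : ℝ) :
    matFun A (fun _ => lam) = lam • 1 := by
  rw [matFun_def hA]
  have h1 : Matrix.diagonal (fun _ : Fin d => lam) = lam • (1 : Matrix (Fin d) (Fin d) ℝ) := by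
    rw [Matrix.smul_one_eq_diagonal]
  rw [h1, Matrix.mul_smul, Matrix.smul_mul, Matrix.mul_one]
  congr 1
  exact Unitary.coe_mul_star_self _

lemma matFun_add_const (hA : A.IsHermitian) (lam : ℝ) :
    matFun A (fun x => x + lam) = A + lam • 1 := by
  have h1 : matFun A (fun x => x + lam) = matFun A (fun x => x) + matFun A (fun _ => lam) := by
    rw [matFun_def hA (fun x => x + lam), matFun_def hA (fun x => x), matFun_def hA]
    rw [← Matrix.add_mul, ← Matrix.mul_add]
    congr 2
    rw [Matrix.diagonal_add]
  rw [h1, matFun_id hA, matFun_smul_one hA]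

lemma matFun_isHermitian (hA : A.IsHermitian) (f : ℝ → ℝ) : (matFun A f).IsHermitian := by
  rw [matFun_def hA]
  unfold Matrix.IsHermitian
  simp only [Matrix.conjTranspose_mul, Matrix.conjTranspose_conjTranspose,
    Matrix.diagonal_conjTranspose, Matrix.mul_assoc]
  congr 2

lemma opNorm_nonneg (M : Matrix (Fin d) (Fin d) ℝ) : 0 ≤ opNorm M := norm_nonneg _

lemma opNorm_mul_le (M N : Matrix (Fin d) (Fin d) ℝ) : opNorm (M * N) ≤ opNorm M * opNorm N := by
  unfold opNorm; rw [_root_.map_mul]; exact norm_mul_le _ _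

lemma opNorm_unitary_le (hd : 0 < d) (U : Matrix.unitaryGroup (Fin d) ℝ) :
    opNorm (U : Matrix (Fin d) (Fin d) ℝ) ≤ 1 := by
  haveI : NeZero d := ⟨hd.ne'⟩
  unfold opNorm
  have h2 : ‖toEuclideanCLM (𝕜 := ℝ) (U : Matrix (Fin d) (Fin d) ℝ)‖ *
      ‖toEuclideanCLM (𝕜 := ℝ) (U : Matrix (Fin d) (Fin d) ℝ)‖ = 1 := by
    rw [← CStarRing.norm_star_mul_self, ← map_star, ← _root_.map_mul]
    rw [Unitary.coe_star_mul_self]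
    simp
  nlinarith [norm_nonneg (toEuclideanCLM (𝕜 := ℝ) (U : Matrix (Fin d) (Fin d) ℝ))]

lemma opNorm_diagonal_le_s4 (v : Fin d → ℝ) (r : ℝ) (hr : 0 ≤ r) (hv : ∀ i, |v i| ≤ r) :
    opNorm (Matrix.diagonal v) ≤ r := by
  unfold opNorm
  apply ContinuousLinearMap.opNorm_le_bound _ hr
  intro x
  have hx : ∀ y : EuclideanSpace ℝ (Fin d), ‖y‖ = Real.sqrt (∑ i, (y i)^2) := by
    intro y; rw [EuclideanSpace.norm_eq]
    congr 1; apply Finset.sum_congr rfl; intro i _; rw [Real.norm_eq_abs, sq_abs]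
  rw [hx, hx]
  rw [← Real.sqrt_sq hr, ← Real.sqrt_mul (by positivity)]
  apply Real.sqrt_le_sqrt
  have happ : ∀ i, (toEuclideanCLM (𝕜 := ℝ) (Matrix.diagonal v) x) i = v i * x i := by
    intro i
    have h0 := Matrix.ofLp_toEuclideanCLM (𝕜 := ℝ) (Matrix.diagonal v) x
    have h2 := congrFun h0 i
    simpa [Matrix.toLin'_apply, Matrix.mulVec_diagonal] using h2
  rw [Finset.mul_sum]
  apply Finset.sum_le_sum
  intro i _
  rw [happ, mul_pow]
  have h1 := hv i
  have h2 : (v i)^2 ≤ r^2 := by nlinarith [abs_nonneg (v i), sq_abs (v i)]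
  nlinarith [sq_nonneg (x i)]

lemma opNorm_matFun_le (hd : 0 < d) (hA : A.IsHermitian) (f : ℝ → ℝ) (r : ℝ) (hr : 0 ≤ r)
    (hf : ∀ i, |f (hA.eigenvalues i)| ≤ r) : opNorm (matFun A f) ≤ r := by
  rw [matFun_def hA]
  have hU : opNorm (hA.eigenvectorUnitary : Matrix (Fin d) (Fin d) ℝ) ≤ 1 :=
    opNorm_unitary_le hd _
  have hUs : opNorm (star (hA.eigenvectorUnitary : Matrix (Fin d) (Fin d) ℝ)) ≤ 1 :=
    opNorm_unitary_le hd (star hA.eigenvectorUnitary)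
  have hD : opNorm (Matrix.diagonal (fun i => f (hA.eigenvalues i))) ≤ r :=
    opNorm_diagonal_le_s4 _ r hr hf
  calc opNorm _ ≤ opNorm ((hA.eigenvectorUnitary : Matrix (Fin d) (Fin d) ℝ) *
        Matrix.diagonal (fun i => f (hA.eigenvalues i))) *
        opNorm (star (hA.eigenvectorUnitary : Matrix (Fin d) (Fin d) ℝ)) := opNorm_mul_le _ _
    _ ≤ opNorm ((hA.eigenvectorUnitary : Matrix (Fin d) (Fin d) ℝ) *
        Matrix.diagonal (fun i => f (hA.eigenvalues i))) * 1 := by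
        apply mul_le_mul_of_nonneg_left hUs (opNorm_nonneg _)
    _ = opNorm ((hA.eigenvectorUnitary : Matrix (Fin d) (Fin d) ℝ) *
        Matrix.diagonal (fun i => f (hA.eigenvalues i))) := mul_one _
    _ ≤ opNorm (hA.eigenvectorUnitary : Matrix (Fin d) (Fin d) ℝ) *
        opNorm (Matrix.diagonal (fun i => f (hA.eigenvalues i))) := opNorm_mul_le _ _
    _ ≤ 1 * r := by
        apply mul_le_mul hU hD (opNorm_nonneg _) zero_le_one
    _ = r := one_mul r

lemma inner_eq_dot (x y : EuclideanSpace ℝ (Fin d)) :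
    ⟪x, y⟫ = (WithLp.equiv 2 _ x) ⬝ᵥ (WithLp.equiv 2 _ y) := by
  rw [PiLp.inner_apply]
  simp [dotProduct, mul_comm]

lemma clm_apply_eq_mulVec (M : Matrix (Fin d) (Fin d) ℝ) (x : EuclideanSpace ℝ (Fin d)) :
    WithLp.equiv 2 _ (toEuclideanCLM (𝕜 := ℝ) M x) = M *ᵥ (WithLp.equiv 2 _ x) := by
  exact Matrix.ofLp_toEuclideanCLM (𝕜 := ℝ) M x

lemma norm_sq_eq_dot (x : EuclideanSpace ℝ (Fin d)) :
    ‖x‖ ^ 2 = (WithLp.equiv 2 _ x) ⬝ᵥ (WithLp.equiv 2 _ x) := by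
  rw [← real_inner_self_eq_norm_sq, inner_eq_dot]

lemma dp_self_nonneg (x : Fin d → ℝ) : 0 ≤ x ⬝ᵥ x :=
  Finset.sum_nonneg fun i _ => mul_self_nonneg _

lemma qf_abs_le (M : Matrix (Fin d) (Fin d) ℝ) (x : Fin d → ℝ) :
    |x ⬝ᵥ (M *ᵥ x)| ≤ opNorm M * (x ⬝ᵥ x) := by
  set x' : EuclideanSpace ℝ (Fin d) := (WithLp.equiv 2 _).symm x with hx'
  have hxc : WithLp.equiv 2 _ x' = x := by simp [hx']
  have h1 : x ⬝ᵥ (M *ᵥ x) = ⟪x', toEuclideanCLM (𝕜 := ℝ) M x'⟫ := by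
    rw [inner_eq_dot, clm_apply_eq_mulVec, hxc]
  rw [h1]
  calc |⟪x', toEuclideanCLM (𝕜 := ℝ) M x'⟫| ≤ ‖x'‖ * ‖toEuclideanCLM (𝕜 := ℝ) M x'‖ :=
        abs_real_inner_le_norm _ _
    _ ≤ ‖x'‖ * (‖toEuclideanCLM (𝕜 := ℝ) M‖ * ‖x'‖) := by
        apply mul_le_mul_of_nonneg_left (ContinuousLinearMap.le_opNorm _ _) (norm_nonneg _)
    _ = opNorm M * (x ⬝ᵥ x) := by
        rw [← hxc, ← norm_sq_eq_dot]; unfold opNorm; ring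

lemma eig_abs_le_of_qf (M : Matrix (Fin d) (Fin d) ℝ) (hM : M.IsHermitian) (r : ℝ)
    (h : ∀ x : Fin d → ℝ, |x ⬝ᵥ (M *ᵥ x)| ≤ r * (x ⬝ᵥ x)) (i : Fin d) :
    |hM.eigenvalues i| ≤ r := by
  set v : Fin d → ℝ := WithLp.equiv 2 _ (hM.eigenvectorBasis i) with hv
  have hnorm : v ⬝ᵥ v = 1 := by
    have h1 : ‖hM.eigenvectorBasis i‖ = 1 := hM.eigenvectorBasis.orthonormal.1 i
    have h2 := norm_sq_eq_dot (hM.eigenvectorBasis i)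
    rw [h1] at h2
    simpa [hv] using h2.symm
  have hmv : M *ᵥ v = hM.eigenvalues i • v := hM.mulVec_eigenvectorBasis i
  have h3 := h v
  rw [hmv, dotProduct_smul, smul_eq_mul, hnorm] at h3
  simpa [abs_mul] using h3

lemma conj_qf (X N : Matrix (Fin d) (Fin d) ℝ) (y : Fin d → ℝ) :
    (X *ᵥ y) ⬝ᵥ (N *ᵥ (X *ᵥ y)) = y ⬝ᵥ ((Xᵀ * N * X) *ᵥ y) := by
  rw [← Matrix.mulVec_mulVec, ← Matrix.mulVec_mulVec, Matrix.dotProduct_mulVec y]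
  rw [Matrix.dotProduct_mulVec, Matrix.vecMul_transpose]
  exact (Matrix.dotProduct_mulVec _ _ _).symm

lemma opNorm_le_of_qf (hd : 0 < d) (M : Matrix (Fin d) (Fin d) ℝ) (hM : M.IsHermitian) (r : ℝ)
    (hr : 0 ≤ r) (h : ∀ x : Fin d → ℝ, |x ⬝ᵥ (M *ᵥ x)| ≤ r * (x ⬝ᵥ x)) :
    opNorm M ≤ r := by
  have h1 : opNorm (matFun M (fun x => x)) ≤ r :=
    opNorm_matFun_le hd hM _ r hr (eig_abs_le_of_qf M hM r h)
  rwa [matFun_id hM] at h1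

end Helpers

set_option maxHeartbeats 1000000 in
set_option synthInstance.maxHeartbeats 400000 in
/-- If `Σ, Σ̂` are PSD, `λ > 0`, `b > 0`, `0 ≤ c̃ < 1/2` with
`‖(Σ+λI)^{-1/2} (Σ - Σ̂) (Σ+λI)^{-1/2}‖ ≤ c̃`, and `g` satisfies `|g(σ)| ≤ b/λ` and
`|g(σ)σ| ≤ b` for every eigenvalue `σ` of `Σ̂`, then
`‖(Σ+λI)^{1/2} g(Σ̂) (Σ+λI)^{1/2}‖ ≤ 2b √(1/(1-2c̃))`. -/
theorem statement4 {d : ℕ} (hd : 0 < d) (S Shat : Matrix (Fin d) (Fin d) ℝ)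
    (hS : S.PosSemidef) (hShat : Shat.PosSemidef) (lam b c : ℝ)
    (hlam : 0 < lam) (hb : 0 < b) (hc0 : 0 ≤ c) (hc : c < 1 / 2)
    (h : opNorm ((matFun (S + lam • 1) Real.sqrt)⁻¹ * (S - Shat) *
        (matFun (S + lam • 1) Real.sqrt)⁻¹) ≤ c)
    (g : ℝ → ℝ)
    (hg1 : ∀ i : Fin d, |g (hShat.1.eigenvalues i)| ≤ b / lam)
    (hg2 : ∀ i : Fin d, |g (hShat.1.eigenvalues i) * hShat.1.eigenvalues i| ≤ b) :
    opNorm (matFun (S + lam • 1) Real.sqrt * matFun Shat g * matFun (S + lam • 1) Real.sqrt) ≤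
      2 * b * Real.sqrt (1 / (1 - 2 * c)) := by
  have h2c : 0 < 1 - 2 * c := by linarith
  have h1c : 0 < 1 - c := by linarith
  -- the matrix A = S + λ I is positive definite
  have hlam1 : (lam • (1 : Matrix (Fin d) (Fin d) ℝ)).PosDef := by
    rw [Matrix.smul_one_eq_diagonal]
    exact Matrix.PosDef.diagonal (fun _ => hlam)
  have hApd : (S + lam • (1 : Matrix (Fin d) (Fin d) ℝ)).PosDef :=
    Matrix.PosDef.posSemidef_add hS hlam1
  set A := S + lam • (1 : Matrix (Fin d) (Fin d) ℝ) with hAdef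
  have hA : A.IsHermitian := hApd.1
  have hνpos : ∀ i, 0 < hA.eigenvalues i := hApd.eigenvalues_pos
  set T := matFun A Real.sqrt with hTdef
  set T' := matFun A (fun x => (Real.sqrt x)⁻¹) with hT'def
  have hT'T : T' * T = 1 := by
    rw [hT'def, hTdef, matFun_mul hA]
    exact matFun_one hA (fun i => inv_mul_cancel₀
      (ne_of_gt (Real.sqrt_pos.mpr (hνpos i))))
  have hTT' : T * T' = 1 := by
    rw [hT'def, hTdef, matFun_mul hA]
    exact matFun_one hA (fun i => mul_inv_cancel₀
      (ne_of_gt (Real.sqrt_pos.mpr (hνpos i))))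
  have hTinv : T⁻¹ = T' := Matrix.inv_eq_left_inv hT'T
  have hTT : T * T = A := by
    rw [hTdef, matFun_mul hA,
      matFun_congr hA (g := fun x => x) (fun i => Real.mul_self_sqrt (hνpos i).le),
      matFun_id hA]
  have hTherm : T.IsHermitian := matFun_isHermitian hA _
  have hT'herm : T'.IsHermitian := matFun_isHermitian hA _
  have hTsymm : Tᵀ = T := by
    rw [← Matrix.conjTranspose_eq_transpose_of_trivial]; exact hTherm
  -- the Σ̂ side
  have hB : Shat.IsHermitian := hShat.1
  have hσnn : ∀ i, 0 ≤ hB.eigenvalues i := hShat.eigenvalues_nonneg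
  have hσlam : ∀ i, 0 < hB.eigenvalues i + lam := fun i => by linarith [hσnn i]
  set Bp := matFun Shat (fun x => Real.sqrt (x + lam)) with hBpdef
  set Bm := matFun Shat (fun x => (Real.sqrt (x + lam))⁻¹) with hBmdef
  have hBpBm : Bp * Bm = 1 := by
    rw [hBpdef, hBmdef, matFun_mul hB]
    exact matFun_one hB (fun i => mul_inv_cancel₀
      (ne_of_gt (Real.sqrt_pos.mpr (hσlam i))))
  have hBmBp : Bm * Bp = 1 := by
    rw [hBpdef, hBmdef, matFun_mul hB]
    exact matFun_one hB (fun i => inv_mul_cancel₀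
      (ne_of_gt (Real.sqrt_pos.mpr (hσlam i))))
  have hBmherm : Bm.IsHermitian := matFun_isHermitian hB _
  have hBmsymm : Bmᵀ = Bm := by
    rw [← Matrix.conjTranspose_eq_transpose_of_trivial]; exact hBmherm
  have hBmLamBm : Bm * (Shat + lam • 1) * Bm = 1 := by
    rw [← matFun_add_const hB lam, hBmdef, matFun_mul hB, matFun_mul hB]
    apply matFun_one hB
    intro i
    have ht := hσlam i
    have hs : Real.sqrt (hB.eigenvalues i + lam) * Real.sqrt (hB.eigenvalues i + lam)
        = hB.eigenvalues i + lam := Real.mul_self_sqrt ht.le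
    have hne : Real.sqrt (hB.eigenvalues i + lam) ≠ 0 :=
      ne_of_gt (Real.sqrt_pos.mpr ht)
    field_simp
    rw [Real.sq_sqrt ht.le]
  -- quadratic form consequences of the hypothesis `h`
  rw [hTinv] at h
  have h0 : ∀ x : Fin d → ℝ, |x ⬝ᵥ ((T' * (S - Shat) * T') *ᵥ x)| ≤ c * (x ⬝ᵥ x) := by
    intro x
    calc |x ⬝ᵥ ((T' * (S - Shat) * T') *ᵥ x)|
        ≤ opNorm (T' * (S - Shat) * T') * (x ⬝ᵥ x) := qf_abs_le _ _
      _ ≤ c * (x ⬝ᵥ x) := mul_le_mul_of_nonneg_right h (dp_self_nonneg x)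
  have hconj : Tᵀ * (T' * (S - Shat) * T') * T = S - Shat := by
    rw [hTsymm]
    calc T * (T' * (S - Shat) * T') * T
        = T * (T' * ((S - Shat) * (T' * T))) := by simp only [Matrix.mul_assoc]
      _ = T * (T' * (S - Shat)) := by rw [hT'T, Matrix.mul_one]
      _ = (T * T') * (S - Shat) := by rw [Matrix.mul_assoc]
      _ = S - Shat := by rw [hTT', Matrix.one_mul]
  have hTx : ∀ y : Fin d → ℝ, (T *ᵥ y) ⬝ᵥ (T *ᵥ y) = y ⬝ᵥ (A *ᵥ y) := by
    intro y
    have h1 : (T *ᵥ y) ⬝ᵥ ((1 : Matrix (Fin d) (Fin d) ℝ) *ᵥ (T *ᵥ y))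
        = y ⬝ᵥ ((Tᵀ * 1 * T) *ᵥ y) := conj_qf T 1 y
    rw [Matrix.one_mulVec, Matrix.mul_one, hTsymm, hTT] at h1
    exact h1
  have hqf1 : ∀ y : Fin d → ℝ, |y ⬝ᵥ ((S - Shat) *ᵥ y)| ≤ c * (y ⬝ᵥ (A *ᵥ y)) := by
    intro y
    have h1 := h0 (T *ᵥ y)
    rw [conj_qf, hconj, hTx y] at h1
    exact h1
  have hqf2 : ∀ y : Fin d → ℝ,
      (1 - c) * (y ⬝ᵥ (A *ᵥ y)) ≤ y ⬝ᵥ ((Shat + lam • 1) *ᵥ y) := by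
    intro y
    have h1 : y ⬝ᵥ ((S - Shat) *ᵥ y) ≤ c * (y ⬝ᵥ (A *ᵥ y)) := (abs_le.mp (hqf1 y)).2
    have h2 : (Shat + lam • (1 : Matrix (Fin d) (Fin d) ℝ)) = A - (S - Shat) := by
      rw [hAdef]; abel
    rw [h2, Matrix.sub_mulVec, dotProduct_sub]
    linarith
  -- the matrix W = Bm A Bm has small norm
  set W := Bm * A * Bm with hWdef
  have hWherm : W.IsHermitian := by
    show Wᴴ = W
    rw [hWdef, Matrix.conjTranspose_mul, Matrix.conjTranspose_mul, hBmherm.eq, hA.eq,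
      Matrix.mul_assoc]
  have hWqf : ∀ x : Fin d → ℝ, |x ⬝ᵥ (W *ᵥ x)| ≤ (1 - c)⁻¹ * (x ⬝ᵥ x) := by
    intro x
    have e1 : x ⬝ᵥ (W *ᵥ x) = (Bm *ᵥ x) ⬝ᵥ (A *ᵥ (Bm *ᵥ x)) := by
      rw [conj_qf, hBmsymm]
    have e2 : (Bm *ᵥ x) ⬝ᵥ ((Shat + lam • 1) *ᵥ (Bm *ᵥ x)) = x ⬝ᵥ x := by
      have h1 := conj_qf Bm (Shat + lam • 1) x
      rw [hBmsymm, hBmLamBm, Matrix.one_mulVec] at h1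
      rw [h1]
    have h1 := hqf2 (Bm *ᵥ x)
    rw [e2] at h1
    have hyA : 0 ≤ (Bm *ᵥ x) ⬝ᵥ (A *ᵥ (Bm *ᵥ x)) := by
      have := hApd.posSemidef.dotProduct_mulVec_nonneg (Bm *ᵥ x)
      simpa using this
    rw [e1, abs_of_nonneg hyA, inv_mul_eq_div, le_div_iff₀ h1c]
    linarith
  have hWnorm : opNorm W ≤ (1 - c)⁻¹ :=
    opNorm_le_of_qf hd W hWherm _ (by positivity) hWqf
  -- the norm of X = T * Bm squared is at most (1-c)⁻¹
  have hXstar : star (T * Bm) * (T * Bm) = W := by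
    rw [Matrix.star_eq_conjTranspose, Matrix.conjTranspose_mul, hBmherm.eq, hTherm.eq]
    calc Bm * T * (T * Bm) = Bm * (T * T) * Bm := by simp only [Matrix.mul_assoc]
      _ = W := by rw [hTT, hWdef]
  have hXsq : opNorm (T * Bm) * opNorm (T * Bm) ≤ (1 - c)⁻¹ := by
    have h1 : opNorm (T * Bm) * opNorm (T * Bm) = opNorm W := by
      unfold opNorm
      rw [← CStarRing.norm_star_mul_self, ← map_star, ← _root_.map_mul, hXstar]
    rw [h1]; exact hWnorm
  -- the middle factor
  have hmid : opNorm (Bp * matFun Shat g * Bp) ≤ 2 * b := by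
    rw [hBpdef, matFun_mul hB, matFun_mul hB]
    apply opNorm_matFun_le hd hB _ (2 * b) (by positivity)
    intro i
    set σ := hB.eigenvalues i with hσdef
    have h1 := hg1 i
    have h2 := hg2 i
    have ht : 0 < σ + lam := hσlam i
    have hs : Real.sqrt (σ + lam) * Real.sqrt (σ + lam) = σ + lam := Real.mul_self_sqrt ht.le
    have habs : |Real.sqrt (σ + lam) * g σ * Real.sqrt (σ + lam)| = |g σ| * (σ + lam) := by
      rw [abs_mul, abs_mul, abs_of_nonneg (Real.sqrt_nonneg _)]
      rw [mul_comm (Real.sqrt (σ + lam)) |g σ|, mul_assoc, hs]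
    rw [habs]
    have h3 : |g σ| * σ ≤ b := by
      have : |g σ * σ| = |g σ| * σ := by
        rw [abs_mul, abs_of_nonneg (hσnn i)]
      linarith [this ▸ h2]
    have h4 : |g σ| * lam ≤ b := by
      have h5 : |g σ| ≤ b / lam := h1
      calc |g σ| * lam ≤ (b / lam) * lam := by
            apply mul_le_mul_of_nonneg_right h5 hlam.le
        _ = b := by field_simp
    nlinarith [abs_nonneg (g σ)]
  -- assemble
  have hdecomp : T * matFun Shat g * T = (T * Bm) * (Bp * matFun Shat g * Bp) * (Bm * T) := by
    have : (T * Bm) * (Bp * matFun Shat g * Bp) * (Bm * T)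
        = T * (Bm * Bp * (matFun Shat g * (Bp * Bm * T))) := by
      simp only [Matrix.mul_assoc]
    rw [this, hBmBp, hBpBm, Matrix.one_mul, Matrix.one_mul, ← Matrix.mul_assoc]
  have hBmT : opNorm (Bm * T) = opNorm (T * Bm) := by
    have hstar1 : star (toEuclideanCLM (𝕜 := ℝ) (Bm * T)) = toEuclideanCLM (𝕜 := ℝ) (T * Bm) := by
      rw [← map_star]
      congr 1
      rw [Matrix.star_eq_conjTranspose, Matrix.conjTranspose_mul, hBmherm.eq, hTherm.eq]
    have hstar2 : star (toEuclideanCLM (𝕜 := ℝ) (T * Bm)) = toEuclideanCLM (𝕜 := ℝ) (Bm * T) := by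
      rw [← map_star]
      congr 1
      rw [Matrix.star_eq_conjTranspose, Matrix.conjTranspose_mul, hTherm.eq, hBmherm.eq]
    have h2 := CStarRing.norm_star_mul_self (x := toEuclideanCLM (𝕜 := ℝ) (Bm * T))
    have h3 := CStarRing.norm_self_mul_star (x := toEuclideanCLM (𝕜 := ℝ) (T * Bm))
    rw [hstar1] at h2
    rw [hstar2] at h3
    have h5 := h2.symm.trans h3
    unfold opNorm
    exact (mul_self_inj (norm_nonneg _) (norm_nonneg _)).mp h5
  have hfinal : opNorm (T * matFun Shat g * T) ≤ 2 * b * (1 - c)⁻¹ := by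
    rw [hdecomp]
    have h1 : opNorm ((T * Bm) * (Bp * matFun Shat g * Bp) * (Bm * T))
        ≤ opNorm (T * Bm) * opNorm (Bp * matFun Shat g * Bp) * opNorm (Bm * T) := by
      calc opNorm ((T * Bm) * (Bp * matFun Shat g * Bp) * (Bm * T))
          ≤ opNorm ((T * Bm) * (Bp * matFun Shat g * Bp)) * opNorm (Bm * T) :=
            opNorm_mul_le _ _
        _ ≤ opNorm (T * Bm) * opNorm (Bp * matFun Shat g * Bp) * opNorm (Bm * T) := by
            apply mul_le_mul_of_nonneg_right (opNorm_mul_le _ _) (opNorm_nonneg _)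
    rw [hBmT] at h1
    have h2 : opNorm (T * Bm) * opNorm (Bp * matFun Shat g * Bp) * opNorm (T * Bm)
        ≤ 2 * b * (1 - c)⁻¹ := by
      nlinarith [opNorm_nonneg (T * Bm), opNorm_nonneg (Bp * matFun Shat g * Bp),
        mul_le_mul_of_nonneg_left hXsq (le_of_lt (show (0:ℝ) < 2 * b by positivity))]
    linarith
  -- final arithmetic comparison
  have harith : 2 * b * (1 - c)⁻¹ ≤ 2 * b * Real.sqrt (1 / (1 - 2 * c)) := by
    apply mul_le_mul_of_nonneg_left _ (by positivity : (0:ℝ) ≤ 2 * b)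
    rw [Real.le_sqrt (by positivity) (by positivity)]
    rw [one_div]
    have key : 1 - 2 * c ≤ (1 - c) ^ 2 := by nlinarith [sq_nonneg c]
    calc ((1 - c)⁻¹) ^ 2 = ((1 - c) ^ 2)⁻¹ := by rw [inv_pow]
      _ ≤ (1 - 2 * c)⁻¹ := by
          apply inv_anti₀ h2c key
  linarith [hfinal, harith]
end

section
/- Let T be a positive integer, let ξ₁, …, ξ_{T+1} and η₁, …, η_T be positive real numbers, and suppose that for every t with 1 ≤ t ≤ T one has ξ_t ≤ Σ_{ℓ=t}^{T} η_ℓ·ξ_{ℓ+1}. Then for every t with 1 ≤ t ≤ T one has ξ_t ≤ (Π_{ℓ=t}^{T-1} (η_ℓ + 1))·η_T·ξ_{T+1} (with the empty product equal to 1 when t = T). -/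
/-- If `ξ₁, …, ξ_{T+1}` and `η₁, …, η_T` are positive and
`ξ_t ≤ Σ_{ℓ=t}^{T} η_ℓ ξ_{ℓ+1}` for all `1 ≤ t ≤ T`, then
`ξ_t ≤ (Π_{ℓ=t}^{T-1} (η_ℓ + 1)) η_T ξ_{T+1}` for all `1 ≤ t ≤ T`. -/
theorem statement6 (T : ℕ) (hT : 0 < T) (ξ η : ℕ → ℝ)
    (hξ : ∀ t, 1 ≤ t → t ≤ T + 1 → 0 < ξ t)
    (hη : ∀ t, 1 ≤ t → t ≤ T → 0 < η t)
    (hrec : ∀ t, 1 ≤ t → t ≤ T → ξ t ≤ ∑ ℓ ∈ Finset.Icc t T, η ℓ * ξ (ℓ + 1)) :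
    ∀ t, 1 ≤ t → t ≤ T →
      ξ t ≤ (∏ ℓ ∈ Finset.Ico t T, (η ℓ + 1)) * η T * ξ (T + 1) := by
  have key : ∀ k t, 1 ≤ t → t + k = T →
      ∑ ℓ ∈ Finset.Icc t T, η ℓ * ξ (ℓ + 1) ≤
        (∏ ℓ ∈ Finset.Ico t T, (η ℓ + 1)) * η T * ξ (T + 1) := by
    intro k
    induction k with
    | zero =>
      intro t ht1 htT
      simp only [Nat.add_zero] at htT
      subst htT
      simp [Finset.Icc_self]
    | succ k ih =>
      intro t ht1 htT
      have htlt : t < T := by omega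
      have hsum : ∑ ℓ ∈ Finset.Icc t T, η ℓ * ξ (ℓ + 1)
          = η t * ξ (t + 1) + ∑ ℓ ∈ Finset.Icc (t + 1) T, η ℓ * ξ (ℓ + 1) := by
        rw [← Finset.Ico_add_one_right_eq_Icc, ← Finset.Ico_add_one_right_eq_Icc,
          Finset.sum_eq_sum_Ico_succ_bot (by omega)]
      have hprod : ∏ ℓ ∈ Finset.Ico t T, (η ℓ + 1)
          = (η t + 1) * ∏ ℓ ∈ Finset.Ico (t + 1) T, (η ℓ + 1) := by
        rw [Finset.prod_eq_prod_Ico_succ_bot htlt]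
      have hS := ih (t + 1) (by omega) (by omega)
      have hx : ξ (t + 1) ≤ ∑ ℓ ∈ Finset.Icc (t + 1) T, η ℓ * ξ (ℓ + 1) :=
        hrec (t + 1) (by omega) (by omega)
      have hηt : 0 < η t := hη t ht1 (le_of_lt htlt)
      calc ∑ ℓ ∈ Finset.Icc t T, η ℓ * ξ (ℓ + 1)
          = η t * ξ (t + 1) + ∑ ℓ ∈ Finset.Icc (t + 1) T, η ℓ * ξ (ℓ + 1) := hsum
        _ ≤ η t * (∑ ℓ ∈ Finset.Icc (t + 1) T, η ℓ * ξ (ℓ + 1))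
            + ∑ ℓ ∈ Finset.Icc (t + 1) T, η ℓ * ξ (ℓ + 1) := by
            have := mul_le_mul_of_nonneg_left hx hηt.le
            linarith
        _ = (η t + 1) * ∑ ℓ ∈ Finset.Icc (t + 1) T, η ℓ * ξ (ℓ + 1) := by ring
        _ ≤ (η t + 1) * ((∏ ℓ ∈ Finset.Ico (t + 1) T, (η ℓ + 1)) * η T * ξ (T + 1)) := by
            have : (0:ℝ) ≤ η t + 1 := by linarith
            exact mul_le_mul_of_nonneg_left hS this
        _ = (∏ ℓ ∈ Finset.Ico t T, (η ℓ + 1)) * η T * ξ (T + 1) := by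
            rw [hprod]; ring
  intro t ht1 htT
  exact le_trans (hrec t ht1 htT) (key (T - t) t ht1 (by omega))
end

section
/- Let Σ be a real symmetric positive semidefinite d×d matrix, λ > 0, θ ∈ ℝ^d, and let x₁, x₂ ∈ ℝ^d, y₁, y₂ ∈ ℝ satisfy ‖x₁‖₂ ≤ C, ‖x₂‖₂ ≤ C, |y₁| ≤ M, |y₂| ≤ M for some C, M ≥ 0. Then ‖(Σ + λI)^{-1/2}·(x₁y₁ − x₁x₁ᵀθ − x₂y₂ + x₂x₂ᵀθ)‖₂ ≤ √2·λ^{-1/2}·max(3C‖θ‖₂ + M, C)·√(‖x₁ − x₂‖₂² + (y₁ − y₂)²). -/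
open Matrix MeasureTheory

section Aux

variable {d : ℕ}

lemma enorm2_eq_norm (x : Fin d → ℝ) :
    enorm2 x = ‖(WithLp.equiv 2 (Fin d → ℝ)).symm x‖ := by
  rw [EuclideanSpace.norm_eq]
  simp [enorm2, sq_abs]

lemma enorm2_nonneg (x : Fin d → ℝ) : 0 ≤ enorm2 x := Real.sqrt_nonneg _

lemma enorm2_smul (c : ℝ) (x : Fin d → ℝ) : enorm2 (c • x) = |c| * enorm2 x := by
  rw [enorm2_eq_norm, enorm2_eq_norm, ← Real.norm_eq_abs, ← norm_smul,
    WithLp.equiv_symm_apply, WithLp.toLp_smul]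

lemma enorm2_add_le (x y : Fin d → ℝ) : enorm2 (x + y) ≤ enorm2 x + enorm2 y := by
  rw [enorm2_eq_norm, enorm2_eq_norm, enorm2_eq_norm, WithLp.equiv_symm_apply, WithLp.toLp_add]
  exact norm_add_le _ _

lemma enorm2_sub_le (x y : Fin d → ℝ) : enorm2 (x - y) ≤ enorm2 x + enorm2 y := by
  rw [enorm2_eq_norm, enorm2_eq_norm, enorm2_eq_norm, WithLp.equiv_symm_apply, WithLp.toLp_sub]
  exact norm_sub_le _ _

lemma abs_dot_le (x y : Fin d → ℝ) : |x ⬝ᵥ y| ≤ enorm2 x * enorm2 y := by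
  rw [enorm2_eq_norm, enorm2_eq_norm]
  have h := abs_real_inner_le_norm ((WithLp.equiv 2 (Fin d → ℝ)).symm x)
    ((WithLp.equiv 2 (Fin d → ℝ)).symm y)
  have he : (inner ℝ ((WithLp.equiv 2 (Fin d → ℝ)).symm x)
      ((WithLp.equiv 2 (Fin d → ℝ)).symm y) : ℝ) = x ⬝ᵥ y := by
    rw [PiLp.inner_apply]
    simp [dotProduct, mul_comm]
  rwa [he] at h

lemma vecMulVec_mulVec' (x y θ : Fin d → ℝ) :
    Matrix.vecMulVec x y *ᵥ θ = (y ⬝ᵥ θ) • x := by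
  funext i
  simp only [Matrix.mulVec, dotProduct, Matrix.vecMulVec_apply, Pi.smul_apply,
    smul_eq_mul, Finset.sum_mul, Finset.mul_sum]
  exact Finset.sum_congr rfl fun j _ => by ring

lemma sum_sq_mulVec_unitary (U : Matrix (Fin d) (Fin d) ℝ) (hU : Uᵀ * U = 1)
    (w : Fin d → ℝ) : ∑ i, (U *ᵥ w) i ^ 2 = ∑ i, w i ^ 2 := by
  have h1 : ∀ v : Fin d → ℝ, ∑ i, v i ^ 2 = v ⬝ᵥ v := fun v => by
    simp [dotProduct, pow_two]
  rw [h1, h1, dotProduct_mulVec, ← vecMul_transpose, vecMul_vecMul, hU, vecMul_one]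

lemma key_opbound (S : Matrix (Fin d) (Fin d) ℝ) (hS : S.PosSemidef) {lam : ℝ}
    (hlam : 0 < lam) (v : Fin d → ℝ) :
    enorm2 ((matFun (S + lam • 1) Real.sqrt)⁻¹ *ᵥ v) ≤ (Real.sqrt lam)⁻¹ * enorm2 v := by
  have hA : (S + lam • 1).IsHermitian := by
    refine hS.1.add ?_
    simp [Matrix.IsHermitian, Matrix.conjTranspose_smul]
  have heig : ∀ i, lam ≤ hA.eigenvalues i := by
    intro i
    set w : Fin d → ℝ := ⇑(hA.eigenvectorBasis i) with hw_def
    have hmul := hA.mulVec_eigenvectorBasis i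
    have hw : w ⬝ᵥ w = 1 := by
      have h1 : ‖hA.eigenvectorBasis i‖ = 1 := hA.eigenvectorBasis.orthonormal.1 i
      have h2 : ‖hA.eigenvectorBasis i‖ ^ 2 = ∑ j, w j ^ 2 := by
        rw [EuclideanSpace.norm_eq, Real.sq_sqrt (by positivity)]
        simp only [Real.norm_eq_abs, sq_abs]
        exact Finset.sum_congr rfl fun j _ => rfl
      have : ∑ j, w j ^ 2 = 1 := by rw [← h2, h1]; norm_num
      rw [← this]; simp [dotProduct, pow_two]
    have h3 : w ⬝ᵥ ((S + lam • 1) *ᵥ w) = hA.eigenvalues i := by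
      rw [hmul, dotProduct_smul, smul_eq_mul, hw, mul_one]
    have h4 : w ⬝ᵥ ((S + lam • 1) *ᵥ w) = w ⬝ᵥ (S *ᵥ w) + lam := by
      rw [Matrix.add_mulVec, dotProduct_add, Matrix.smul_mulVec,
        Matrix.one_mulVec, dotProduct_smul, smul_eq_mul, hw, mul_one]
    have h5 : 0 ≤ w ⬝ᵥ (S *ᵥ w) := by simpa using hS.dotProduct_mulVec_nonneg w
    linarith [h3 ▸ h4]
  set U : Matrix (Fin d) (Fin d) ℝ := (hA.eigenvectorUnitary : Matrix (Fin d) (Fin d) ℝ)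
    with hU_def
  have hsUU : star U * U = 1 := Unitary.coe_star_mul_self hA.eigenvectorUnitary
  have hUsU : U * star U = 1 := Unitary.coe_mul_star_self hA.eigenvectorUnitary
  have hstar : star U = Uᵀ := by simp [Matrix.star_eq_conjTranspose]
  set g : Fin d → ℝ := fun i => Real.sqrt (hA.eigenvalues i) with hg_def
  have hg_pos : ∀ i, 0 < g i := fun i => Real.sqrt_pos.2 (lt_of_lt_of_le hlam (heig i))
  have hmf : matFun (S + lam • 1) Real.sqrt = U * Matrix.diagonal g * star U := by
    rw [matFun, dif_pos hA]
  have hinv : (matFun (S + lam • 1) Real.sqrt)⁻¹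
      = U * Matrix.diagonal (fun i => (g i)⁻¹) * star U := by
    have hd : (Matrix.diagonal g)⁻¹ = Matrix.diagonal (fun i => (g i)⁻¹) := by
      apply Matrix.inv_eq_left_inv
      rw [Matrix.diagonal_mul_diagonal]
      have hfe : (fun i => (g i)⁻¹ * g i) = fun _ => (1 : ℝ) :=
        funext fun i => inv_mul_cancel₀ (hg_pos i).ne'
      rw [hfe, Matrix.diagonal_one]
    rw [hmf, Matrix.mul_inv_rev, Matrix.mul_inv_rev,
      Matrix.inv_eq_left_inv hUsU, Matrix.inv_eq_left_inv hsUU, hd, mul_assoc]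
  rw [hinv]
  have hchain : (U * Matrix.diagonal (fun i => (g i)⁻¹) * star U) *ᵥ v
      = U *ᵥ (Matrix.diagonal (fun i => (g i)⁻¹) *ᵥ (star U *ᵥ v)) := by
    rw [Matrix.mulVec_mulVec, Matrix.mulVec_mulVec]
  rw [hchain]
  set z := star U *ᵥ v with hz_def
  have hz_norm : ∑ i, z i ^ 2 = ∑ i, v i ^ 2 := by
    have hUT : (star U)ᵀ * star U = 1 := by
      rw [hstar, Matrix.transpose_transpose]
      rw [← hstar]; exact hUsU
    exact sum_sq_mulVec_unitary (star U) hUT v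
  have hUnorm : ∑ i, (U *ᵥ (Matrix.diagonal (fun i => (g i)⁻¹) *ᵥ z)) i ^ 2
      = ∑ i, (Matrix.diagonal (fun i => (g i)⁻¹) *ᵥ z) i ^ 2 := by
    apply sum_sq_mulVec_unitary
    rw [← hstar]; exact hsUU
  have hdiag : ∑ i, (Matrix.diagonal (fun i => (g i)⁻¹) *ᵥ z) i ^ 2
      ≤ (Real.sqrt lam)⁻¹ ^ 2 * ∑ i, z i ^ 2 := by
    rw [Finset.mul_sum]
    apply Finset.sum_le_sum
    intro i _
    rw [Matrix.mulVec_diagonal, mul_pow]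
    apply mul_le_mul_of_nonneg_right _ (sq_nonneg _)
    rw [inv_pow, inv_pow]
    apply inv_anti₀ (by positivity)
    apply pow_le_pow_left₀ (Real.sqrt_nonneg _)
    exact Real.sqrt_le_sqrt (heig i)
  unfold enorm2
  rw [hUnorm]
  calc Real.sqrt (∑ i, (Matrix.diagonal (fun i => (g i)⁻¹) *ᵥ z) i ^ 2)
      ≤ Real.sqrt ((Real.sqrt lam)⁻¹ ^ 2 * ∑ i, z i ^ 2) := Real.sqrt_le_sqrt hdiag
    _ = (Real.sqrt lam)⁻¹ * Real.sqrt (∑ i, v i ^ 2) := by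
        rw [hz_norm, Real.sqrt_mul (by positivity), Real.sqrt_sq (by positivity)]

end Aux

/-- For PSD `Σ`, `λ > 0`, `θ ∈ ℝ^d` and `‖x₁‖₂, ‖x₂‖₂ ≤ C`,
`|y₁|, |y₂| ≤ M`:
`‖(Σ+λI)^{-1/2} (x₁y₁ - x₁x₁ᵀθ - x₂y₂ + x₂x₂ᵀθ)‖₂
  ≤ √2 λ^{-1/2} max(3C‖θ‖₂ + M, C) √(‖x₁-x₂‖₂² + (y₁-y₂)²)`. -/
theorem statement13 {d : ℕ} (hd : 0 < d) (S : Matrix (Fin d) (Fin d) ℝ)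
    (hS : S.PosSemidef) (lam : ℝ) (hlam : 0 < lam) (θ : Fin d → ℝ)
    (C M : ℝ) (hC : 0 ≤ C) (hM : 0 ≤ M) (x₁ x₂ : Fin d → ℝ) (y₁ y₂ : ℝ)
    (hx1 : enorm2 x₁ ≤ C) (hx2 : enorm2 x₂ ≤ C) (hy1 : |y₁| ≤ M) (hy2 : |y₂| ≤ M) :
    enorm2 (((matFun (S + lam • 1) Real.sqrt)⁻¹) *ᵥ
        (y₁ • x₁ - Matrix.vecMulVec x₁ x₁ *ᵥ θ - y₂ • x₂ + Matrix.vecMulVec x₂ x₂ *ᵥ θ)) ≤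
      Real.sqrt 2 * lam ^ (-(1 : ℝ) / 2) * max (3 * C * enorm2 θ + M) C *
        Real.sqrt (enorm2 (x₁ - x₂) ^ 2 + (y₁ - y₂) ^ 2) := by
  set v := y₁ • x₁ - Matrix.vecMulVec x₁ x₁ *ᵥ θ - y₂ • x₂ + Matrix.vecMulVec x₂ x₂ *ᵥ θ
    with hv_def
  set n := enorm2 (x₁ - x₂) with hn_def
  set t := |y₁ - y₂| with ht_def
  set T := enorm2 θ with hT_def
  set K := max (3 * C * T + M) C with hK_def
  have hn0 : 0 ≤ n := enorm2_nonneg _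
  have ht0 : 0 ≤ t := abs_nonneg _
  have hT0 : 0 ≤ T := enorm2_nonneg _
  have hKC : C ≤ K := le_max_right _ _
  have hKM : 3 * C * T + M ≤ K := le_max_left _ _
  have hCT : 0 ≤ C * T := mul_nonneg hC hT0
  have hK0 : 0 ≤ K := le_trans hC hKC
  -- decomposition of v
  have hdec : v = (y₁ - y₂) • x₁ + y₂ • (x₁ - x₂)
      - ((x₁ ⬝ᵥ θ) • (x₁ - x₂) + ((x₁ - x₂) ⬝ᵥ θ) • x₂) := by
    rw [hv_def, vecMulVec_mulVec', vecMulVec_mulVec', sub_dotProduct]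
    module
  -- norm bound on v
  have hvb : enorm2 v ≤ t * C + M * n + (C * T * n + n * T * C) := by
    have hstep : enorm2 v ≤ enorm2 ((y₁ - y₂) • x₁) + enorm2 (y₂ • (x₁ - x₂))
        + (enorm2 ((x₁ ⬝ᵥ θ) • (x₁ - x₂)) + enorm2 (((x₁ - x₂) ⬝ᵥ θ) • x₂)) := by
      rw [hdec]
      calc enorm2 ((y₁ - y₂) • x₁ + y₂ • (x₁ - x₂)
            - ((x₁ ⬝ᵥ θ) • (x₁ - x₂) + ((x₁ - x₂) ⬝ᵥ θ) • x₂))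
          ≤ enorm2 ((y₁ - y₂) • x₁ + y₂ • (x₁ - x₂))
            + enorm2 ((x₁ ⬝ᵥ θ) • (x₁ - x₂) + ((x₁ - x₂) ⬝ᵥ θ) • x₂) :=
            enorm2_sub_le _ _
        _ ≤ _ := add_le_add (enorm2_add_le _ _) (enorm2_add_le _ _)
    rw [enorm2_smul, enorm2_smul, enorm2_smul, enorm2_smul] at hstep
    refine le_trans hstep ?_
    have e1 : |y₁ - y₂| * enorm2 x₁ ≤ t * C :=
      mul_le_mul le_rfl hx1 (enorm2_nonneg _) ht0
    have e2 : |y₂| * enorm2 (x₁ - x₂) ≤ M * n := by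
      exact mul_le_mul hy2 le_rfl hn0 hM
    have e3 : |x₁ ⬝ᵥ θ| * enorm2 (x₁ - x₂) ≤ C * T * n := by
      refine mul_le_mul ?_ le_rfl hn0 (by positivity)
      exact le_trans (abs_dot_le _ _) (mul_le_mul_of_nonneg_right hx1 hT0)
    have e4 : |(x₁ - x₂) ⬝ᵥ θ| * enorm2 x₂ ≤ n * T * C := by
      refine mul_le_mul ?_ hx2 (enorm2_nonneg _) (by positivity)
      exact abs_dot_le _ _
    linarith
  have hvK : enorm2 v ≤ K * (n + t) := by
    refine le_trans hvb ?_
    nlinarith [mul_nonneg ht0 (sub_nonneg.2 hKC),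
      mul_nonneg hn0 (by nlinarith : (0:ℝ) ≤ K - (M + 2 * (C * T)))]
  -- n + t ≤ √2 · √(n² + t²)
  have hnt : n + t ≤ Real.sqrt 2 * Real.sqrt (n ^ 2 + t ^ 2) := by
    have h1 : (n + t) ^ 2 ≤ 2 * (n ^ 2 + t ^ 2) := by nlinarith [sq_nonneg (n - t)]
    have h2 := Real.sqrt_le_sqrt h1
    rw [Real.sqrt_sq (by positivity), Real.sqrt_mul (by norm_num)] at h2
    exact h2
  have ht2 : t ^ 2 = (y₁ - y₂) ^ 2 := sq_abs _
  have hrpow : lam ^ (-(1 : ℝ) / 2) = (Real.sqrt lam)⁻¹ := by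
    rw [Real.sqrt_eq_rpow, ← Real.rpow_neg hlam.le]
    norm_num
  have hsl : 0 ≤ (Real.sqrt lam)⁻¹ := by positivity
  calc enorm2 ((matFun (S + lam • 1) Real.sqrt)⁻¹ *ᵥ v)
      ≤ (Real.sqrt lam)⁻¹ * enorm2 v := key_opbound S hS hlam v
    _ ≤ (Real.sqrt lam)⁻¹ * (K * (Real.sqrt 2 * Real.sqrt (n ^ 2 + t ^ 2))) := by
        apply mul_le_mul_of_nonneg_left _ hsl
        exact le_trans hvK (mul_le_mul_of_nonneg_left hnt hK0)
    _ = Real.sqrt 2 * lam ^ (-(1 : ℝ) / 2) * K * Real.sqrt (n ^ 2 + (y₁ - y₂) ^ 2) := by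
        rw [hrpow, ← ht2]; ring
end

section
/- Let (Ω, 𝔉, P) be a probability space, X : Ω → ℝ^d measurable, θ ∈ ℝ^d, C, B ≥ 0, and λ > 0. Suppose ‖X(ω)‖₂ ≤ C and |X(ω)ᵀθ| ≤ B for P-almost every ω, and let Σ = E[X Xᵀ]. Then E[‖(Σ + λI)^{-1/2}·(X(ω)X(ω)ᵀ − Σ)·θ‖₂²] ≤ B²·Tr(Σ·(Σ + λI)^{-1}). -/
open Matrix MeasureTheory

/-- The second-moment (covariance) matrix `Σ = E[X Xᵀ]`, defined as the entrywise
Bochner integral of the outer product `X Xᵀ`. -/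
noncomputable def covMatrix {d : ℕ} {Ω : Type*} [MeasurableSpace Ω] (P : Measure Ω)
    (X : Ω → Fin d → ℝ) : Matrix (Fin d) (Fin d) ℝ :=
  Matrix.of fun i j => ∫ ω, X ω i * X ω j ∂P

/-! ### Auxiliary lemmas -/

lemma star_eq_transpose' {d : ℕ} (B : Matrix (Fin d) (Fin d) ℝ) : star B = Bᵀ := by
  ext i j; simp [Matrix.star_apply]

lemma UDU_mul {d : ℕ} (U : Matrix (Fin d) (Fin d) ℝ) (hU : star U * U = 1)
    (f g : Fin d → ℝ) :
    (U * Matrix.diagonal f * star U) * (U * Matrix.diagonal g * star U) =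
      U * Matrix.diagonal (fun i => f i * g i) * star U := by
  have h1 : star U * (U * Matrix.diagonal g * star U) = Matrix.diagonal g * star U := by
    rw [← Matrix.mul_assoc, ← Matrix.mul_assoc, hU, Matrix.one_mul]
  calc (U * Matrix.diagonal f * star U) * (U * Matrix.diagonal g * star U)
      = U * Matrix.diagonal f * (star U * (U * Matrix.diagonal g * star U)) := by
        rw [Matrix.mul_assoc]
    _ = U * Matrix.diagonal f * (Matrix.diagonal g * star U) := by rw [h1]
    _ = U * (Matrix.diagonal f * Matrix.diagonal g) * star U := by
        rw [Matrix.mul_assoc, Matrix.mul_assoc, Matrix.mul_assoc]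
    _ = U * Matrix.diagonal (fun i => f i * g i) * star U := by
        rw [Matrix.diagonal_mul_diagonal]

/-- Key facts about `M = (matFun A sqrt)⁻¹` for a posdef `A`:
it is symmetric and squares to `A⁻¹`. -/
lemma matFun_sqrt_inv {d : ℕ} {A : Matrix (Fin d) (Fin d) ℝ} (hApd : A.PosDef) :
    ((matFun A Real.sqrt)⁻¹)ᵀ = (matFun A Real.sqrt)⁻¹ ∧
    (matFun A Real.sqrt)⁻¹ * (matFun A Real.sqrt)⁻¹ = A⁻¹ := by
  have hA : A.IsHermitian := hApd.isHermitian
  set U : Matrix (Fin d) (Fin d) ℝ := (hA.eigenvectorUnitary : Matrix (Fin d) (Fin d) ℝ)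
    with hUdef
  have hU : star U * U = 1 := Matrix.mem_unitaryGroup_iff'.mp (hA.eigenvectorUnitary).2
  have hU' : U * star U = 1 := Matrix.mem_unitaryGroup_iff.mp (hA.eigenvectorUnitary).2
  have hμ0 : ∀ i, 0 < hA.eigenvalues i := hApd.eigenvalues_pos
  obtain ⟨ev, hev⟩ : ∃ ev, ev = hA.eigenvalues := ⟨_, rfl⟩
  have hμ : ∀ i, 0 < ev i := by rw [hev]; exact hμ0
  have hspec : A = U * Matrix.diagonal ev * star U := by
    have := hA.spectral_theorem
    rw [hev]
    simpa [RCLike.ofReal_real_eq_id] using this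
  have hS : matFun A Real.sqrt =
      U * Matrix.diagonal (fun i => Real.sqrt (ev i)) * star U := by
    rw [matFun, dif_pos hA, hev]
  have hsq : ∀ i, Real.sqrt (ev i) ≠ 0 := fun i =>
    ne_of_gt (Real.sqrt_pos.mpr (hμ i))
  set T : Matrix (Fin d) (Fin d) ℝ :=
    U * Matrix.diagonal (fun i => (Real.sqrt (ev i))⁻¹) * star U with hTdef
  have hST : matFun A Real.sqrt * T = 1 := by
    rw [hS, hTdef, UDU_mul U hU]
    have : (fun i => Real.sqrt (ev i) * (Real.sqrt (ev i))⁻¹) =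
        fun _ => (1 : ℝ) := by
      funext i; exact mul_inv_cancel₀ (hsq i)
    rw [this, Matrix.diagonal_one, Matrix.mul_one, hU']
  have hMT : (matFun A Real.sqrt)⁻¹ = T := Matrix.inv_eq_right_inv hST
  constructor
  · rw [hMT, hTdef, star_eq_transpose']
    rw [Matrix.transpose_mul, Matrix.transpose_mul, Matrix.transpose_transpose,
      Matrix.diagonal_transpose, Matrix.mul_assoc]
  · rw [hMT, hTdef, UDU_mul U hU]
    have hAinv : A * (U * Matrix.diagonal
        (fun i => (Real.sqrt (ev i))⁻¹ * (Real.sqrt (ev i))⁻¹) * star U)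
        = 1 := by
      rw [hspec, UDU_mul U hU]
      have : (fun i => ev i *
          ((Real.sqrt (ev i))⁻¹ * (Real.sqrt (ev i))⁻¹)) =
          fun _ => (1 : ℝ) := by
        funext i
        rw [← mul_inv, Real.mul_self_sqrt (le_of_lt (hμ i))]
        exact mul_inv_cancel₀ (ne_of_gt (hμ i))
      rw [this, Matrix.diagonal_one, Matrix.mul_one, hU']
    exact (Matrix.inv_eq_right_inv hAinv).symm

lemma integrable_of_bound {Ω : Type*} [MeasurableSpace Ω] {P : Measure Ω}
    [IsFiniteMeasure P] {h : Ω → ℝ} (hm : AEStronglyMeasurable h P) (K : ℝ)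
    (hb : ∀ᵐ ω ∂P, |h ω| ≤ K) : Integrable h P :=
  (integrable_const K).mono' hm (by simpa [Real.norm_eq_abs] using hb)

section IntLemmas

variable {d : ℕ} {Ω : Type*} [MeasurableSpace Ω] {P : Measure Ω} [IsProbabilityMeasure P]
  {X : Ω → Fin d → ℝ} {C : ℝ}

lemma integrable_entry (hX : Measurable X) (hXC : ∀ᵐ ω ∂P, ∀ i, |X ω i| ≤ C)
    (j k : Fin d) : Integrable (fun ω => X ω j * X ω k) P := by
  refine integrable_of_bound (((measurable_pi_apply j).comp hX).mul
    ((measurable_pi_apply k).comp hX)).aestronglyMeasurable (C * C) ?_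
  filter_upwards [hXC] with ω hb
  rw [abs_mul]
  exact mul_le_mul (hb j) (hb k) (abs_nonneg _) ((abs_nonneg _).trans (hb j))

lemma integral_dot_mul_dot (hX : Measurable X) (hXC : ∀ᵐ ω ∂P, ∀ i, |X ω i| ≤ C)
    (a b : Fin d → ℝ) :
    ∫ ω, (a ⬝ᵥ X ω) * (b ⬝ᵥ X ω) ∂P = a ⬝ᵥ (covMatrix P X *ᵥ b) := by
  have hpt : ∀ ω, (a ⬝ᵥ X ω) * (b ⬝ᵥ X ω) =
      ∑ j, ∑ k, (a j * b k) * (X ω j * X ω k) := by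
    intro ω
    simp only [dotProduct, Finset.sum_mul_sum]
    exact Finset.sum_congr rfl fun j _ => Finset.sum_congr rfl fun k _ => by ring
  simp only [hpt]
  rw [integral_finset_sum _ (fun j _ => integrable_finset_sum _
    (fun k _ => ((integrable_entry hX hXC j k).const_mul _)))]
  have : ∀ j, ∫ ω, ∑ k, (a j * b k) * (X ω j * X ω k) ∂P
      = ∑ k, (a j * b k) * ∫ ω, X ω j * X ω k ∂P := by
    intro j
    rw [integral_finset_sum _ (fun k _ => ((integrable_entry hX hXC j k).const_mul _))]
    exact Finset.sum_congr rfl fun k _ => integral_const_mul _ _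
  simp only [this, covMatrix, dotProduct, mulVec, Matrix.of_apply, Finset.mul_sum]
  exact Finset.sum_congr rfl fun j _ => Finset.sum_congr rfl fun k _ => by ring

set_option linter.unusedSectionVars false in
lemma covMatrix_transpose : (covMatrix P X)ᵀ = covMatrix P X := by
  ext i j
  simp only [Matrix.transpose_apply, covMatrix, Matrix.of_apply, mul_comm]

lemma covMatrix_psd (hX : Measurable X) (hXC : ∀ᵐ ω ∂P, ∀ i, |X ω i| ≤ C)
    (x : Fin d → ℝ) : 0 ≤ x ⬝ᵥ (covMatrix P X *ᵥ x) := by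
  rw [← integral_dot_mul_dot hX hXC x x]
  exact integral_nonneg fun ω => mul_self_nonneg _

end IntLemmas

/-- If `‖X‖₂ ≤ C` and `|Xᵀθ| ≤ B` a.s. and `λ > 0`, then
`E[‖(Σ+λI)^{-1/2} (X Xᵀ - Σ) θ‖₂²] ≤ B² Tr(Σ (Σ+λI)⁻¹)` where `Σ = E[X Xᵀ]`. -/
theorem statement15 {d : ℕ} (hd : 0 < d) {Ω : Type*} [MeasurableSpace Ω]
    (P : Measure Ω) [IsProbabilityMeasure P]
    (X : Ω → Fin d → ℝ) (hX : Measurable X) (θ : Fin d → ℝ)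
    (C B : ℝ) (hC : 0 ≤ C) (hB : 0 ≤ B) (lam : ℝ) (hlam : 0 < lam)
    (hXC : ∀ᵐ ω ∂P, enorm2 (X ω) ≤ C)
    (hXθ : ∀ᵐ ω ∂P, |X ω ⬝ᵥ θ| ≤ B) :
    ∫ ω, (enorm2 (((matFun (covMatrix P X + lam • 1) Real.sqrt)⁻¹) *ᵥ
          ((Matrix.vecMulVec (X ω) (X ω) - covMatrix P X) *ᵥ θ))) ^ 2 ∂P ≤
      B ^ 2 * Matrix.trace (covMatrix P X * (covMatrix P X + lam • 1)⁻¹) := by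
  -- coordinatewise a.e. bound
  have hbd : ∀ᵐ ω ∂P, ∀ i, |X ω i| ≤ C := by
    filter_upwards [hXC] with ω h i
    calc |X ω i| = Real.sqrt ((X ω i) ^ 2) := (Real.sqrt_sq_eq_abs _).symm
      _ ≤ Real.sqrt (∑ j, (X ω j) ^ 2) :=
        Real.sqrt_le_sqrt (Finset.single_le_sum (f := fun j => X ω j ^ 2) (fun j _ => sq_nonneg _) (Finset.mem_univ i))
      _ ≤ C := h
  -- positive definiteness of A = Σ + λ I
  have hApd : (covMatrix P X + lam • (1 : Matrix (Fin d) (Fin d) ℝ)).PosDef := by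
    rw [Matrix.posDef_iff_dotProduct_mulVec]
    constructor
    · ext i j
      simp [Matrix.conjTranspose_apply, Matrix.add_apply, Matrix.smul_apply,
        Matrix.one_apply, covMatrix, mul_comm, eq_comm]
    · intro x hx
      have hsx : star x = x := by funext i; simp
      rw [hsx, Matrix.add_mulVec, Matrix.smul_mulVec, Matrix.one_mulVec,
        dotProduct_add, dotProduct_smul]
      have h1 : 0 ≤ x ⬝ᵥ (covMatrix P X *ᵥ x) := covMatrix_psd hX hbd x
      have h2 : 0 < x ⬝ᵥ x := by
        rcases Function.ne_iff.mp hx with ⟨i, hi⟩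
        have : 0 < x i * x i := mul_self_pos.mpr hi
        calc (0:ℝ) < x i * x i := this
          _ ≤ ∑ j, x j * x j :=
            Finset.single_le_sum (f := fun j => x j * x j) (fun j _ => mul_self_nonneg _) (Finset.mem_univ i)
          _ = x ⬝ᵥ x := rfl
      have h3 : 0 < lam • (x ⬝ᵥ x) := by
        simp only [smul_eq_mul]; exact mul_pos hlam h2
      linarith
  obtain ⟨hMsym, hMM⟩ := matFun_sqrt_inv hApd
  set M := (matFun (covMatrix P X + lam • (1 : Matrix (Fin d) (Fin d) ℝ)) Real.sqrt)⁻¹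
    with hMdef
  set g : Ω → ℝ := fun ω => X ω ⬝ᵥ θ with hgdef
  set u : Ω → Fin d → ℝ := fun ω => M *ᵥ X ω with hudef
  set c : Fin d → ℝ := M *ᵥ (covMatrix P X *ᵥ θ) with hcdef
  -- measurability
  have hgm : Measurable g := by
    rw [hgdef]
    exact Finset.measurable_sum _ fun i _ => ((measurable_pi_apply i).comp hX).mul_const _
  have hum : ∀ i, Measurable fun ω => u ω i := by
    intro i
    have : (fun ω => u ω i) = fun ω => ∑ j, M i j * X ω j := rfl
    rw [this]
    exact Finset.measurable_sum _ fun j _ => ((measurable_pi_apply j).comp hX).const_mul _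
  -- a.e. bounds
  set K : Fin d → ℝ := fun i => (∑ j, |M i j|) * C with hKdef
  have huK : ∀ᵐ ω ∂P, ∀ i, |u ω i| ≤ K i := by
    filter_upwards [hbd] with ω hb i
    have h0 : u ω i = ∑ j, M i j * X ω j := rfl
    rw [h0]
    calc |∑ j, M i j * X ω j| ≤ ∑ j, |M i j * X ω j| := Finset.abs_sum_le_sum_abs _ _
      _ ≤ ∑ j, |M i j| * C := Finset.sum_le_sum fun j _ => by
          rw [abs_mul]; exact mul_le_mul_of_nonneg_left (hb j) (abs_nonneg _)
      _ = K i := (Finset.sum_mul _ _ _).symm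
  have hK0 : ∀ i, 0 ≤ K i :=
    fun i => mul_nonneg (Finset.sum_nonneg fun j _ => abs_nonneg _) hC
  -- integrability
  have hIgu : ∀ i, Integrable (fun ω => g ω * u ω i) P := by
    intro i
    refine integrable_of_bound ((hgm.mul (hum i)).aestronglyMeasurable) (B * K i) ?_
    filter_upwards [hXθ, huK] with ω h1 h2
    rw [abs_mul]
    exact mul_le_mul h1 (h2 i) (abs_nonneg _) hB
  have hIgu2 : ∀ i, Integrable (fun ω => (g ω * u ω i) ^ 2) P := by
    intro i
    refine integrable_of_bound ((hgm.mul (hum i)).pow_const 2).aestronglyMeasurable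
      ((B * K i) ^ 2) ?_
    filter_upwards [hXθ, huK] with ω h1 h2
    rw [abs_pow]
    refine pow_le_pow_left₀ (abs_nonneg _) ?_ 2
    rw [abs_mul]
    exact mul_le_mul h1 (h2 i) (abs_nonneg _) hB
  have hIu2 : ∀ i, Integrable (fun ω => u ω i ^ 2) P := by
    intro i
    refine integrable_of_bound ((hum i).pow_const 2).aestronglyMeasurable ((K i) ^ 2) ?_
    filter_upwards [huK] with ω h2
    rw [abs_pow]
    exact pow_le_pow_left₀ (abs_nonneg _) (h2 i) 2
  -- the mean identity
  have hmean : ∀ i, ∫ ω, g ω * u ω i ∂P = c i := by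
    intro i
    have hpt : (fun ω => g ω * u ω i) =
        fun ω => ((fun j => M i j) ⬝ᵥ X ω) * (θ ⬝ᵥ X ω) := by
      funext ω
      show (X ω ⬝ᵥ θ) * ((fun j => M i j) ⬝ᵥ X ω) = _
      rw [dotProduct_comm (X ω) θ]; ring
    rw [hpt, integral_dot_mul_dot hX hbd]
    rfl
  -- second moment of u
  have hu2 : ∀ i, ∫ ω, u ω i ^ 2 ∂P =
      (fun j => M i j) ⬝ᵥ (covMatrix P X *ᵥ fun j => M i j) := by
    intro i
    have hpt : (fun ω => u ω i ^ 2) =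
        fun ω => ((fun j => M i j) ⬝ᵥ X ω) * ((fun j => M i j) ⬝ᵥ X ω) := by
      funext ω; rw [sq]; rfl
    rw [hpt, integral_dot_mul_dot hX hbd]
  -- integrability of centered squares
  have hfe : ∀ i, (fun ω => (g ω * u ω i - c i) ^ 2) =
      fun ω => ((g ω * u ω i) ^ 2 - (2 * c i) * (g ω * u ω i)) + (c i) ^ 2 := by
    intro i; funext ω; ring
  have hInt1 : ∀ i, Integrable
      (fun ω => (g ω * u ω i) ^ 2 - (2 * c i) * (g ω * u ω i)) P :=
    fun i => (hIgu2 i).sub ((hIgu i).const_mul _)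
  have hIsq : ∀ i, Integrable (fun ω => (g ω * u ω i - c i) ^ 2) P := by
    intro i
    rw [hfe i]
    exact (hInt1 i).add (integrable_const _)
  -- variance bound
  have hvar : ∀ i, ∫ ω, (g ω * u ω i - c i) ^ 2 ∂P ≤ ∫ ω, (g ω * u ω i) ^ 2 ∂P := by
    intro i
    have hcalc : ∫ ω, (g ω * u ω i - c i) ^ 2 ∂P
        = (∫ ω, (g ω * u ω i) ^ 2 ∂P) - (c i) ^ 2 := by
      rw [hfe i, integral_add (hInt1 i) (integrable_const _), integral_const]
      rw [integral_sub (hIgu2 i) ((hIgu i).const_mul _), integral_const_mul, hmean i]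
      simp [measure_univ]
      ring
    rw [hcalc]
    exact sub_le_self _ (sq_nonneg _)
  -- pointwise rewriting of the goal integrand
  have hgoal_pt : ∀ ω,
      (enorm2 (M *ᵥ ((Matrix.vecMulVec (X ω) (X ω) - covMatrix P X) *ᵥ θ))) ^ 2 =
        ∑ i, (g ω * u ω i - c i) ^ 2 := by
    intro ω
    have h2 : ∀ j, (Matrix.vecMulVec (X ω) (X ω) *ᵥ θ) j = g ω * X ω j := by
      intro j
      show ∑ k, X ω j * X ω k * θ k = (∑ k, X ω k * θ k) * X ω j
      rw [Finset.sum_mul]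
      exact Finset.sum_congr rfl fun k _ => by ring
    have h1 : M *ᵥ ((Matrix.vecMulVec (X ω) (X ω) - covMatrix P X) *ᵥ θ) =
        fun i => g ω * u ω i - c i := by
      funext i
      rw [Matrix.sub_mulVec, Matrix.mulVec_sub]
      have h3 : (M *ᵥ (Matrix.vecMulVec (X ω) (X ω) *ᵥ θ)) i = g ω * u ω i := by
        show ∑ j, M i j * (Matrix.vecMulVec (X ω) (X ω) *ᵥ θ) j = g ω * u ω i
        simp only [h2]
        have h4 : u ω i = ∑ j, M i j * X ω j := rfl
        rw [h4, Finset.mul_sum]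
        exact Finset.sum_congr rfl fun j _ => by ring
      show (M *ᵥ (Matrix.vecMulVec (X ω) (X ω) *ᵥ θ)) i -
          (M *ᵥ (covMatrix P X *ᵥ θ)) i = g ω * u ω i - c i
      rw [h3]
    rw [h1, enorm2, Real.sq_sqrt (Finset.sum_nonneg fun i _ => sq_nonneg _)]
  -- the trace identity
  have htr : ∑ i, ((fun j => M i j) ⬝ᵥ (covMatrix P X *ᵥ fun j => M i j)) =
      Matrix.trace (covMatrix P X * (covMatrix P X + lam • 1)⁻¹) := by
    rw [← hMM]
    have h1 : ∀ i, ((fun j => M i j) ⬝ᵥ (covMatrix P X *ᵥ fun j => M i j)) =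
        (M * covMatrix P X * Mᵀ) i i := by
      intro i
      show ∑ j, M i j * ∑ k, covMatrix P X j k * M i k
        = ∑ j, (∑ k, M i k * covMatrix P X k j) * M i j
      simp only [Finset.mul_sum, Finset.sum_mul]
      rw [Finset.sum_comm]
      exact Finset.sum_congr rfl fun j _ => Finset.sum_congr rfl fun k _ => by ring
    have h2 : ∑ i, ((fun j => M i j) ⬝ᵥ (covMatrix P X *ᵥ fun j => M i j))
        = Matrix.trace (M * covMatrix P X * Mᵀ) := by
      rw [Matrix.trace]
      exact Finset.sum_congr rfl fun i _ => h1 i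
    rw [h2, hMsym, Matrix.trace_mul_cycle, Matrix.trace_mul_comm]
  -- main chain
  calc ∫ ω, (enorm2 (M *ᵥ ((Matrix.vecMulVec (X ω) (X ω) - covMatrix P X) *ᵥ θ))) ^ 2 ∂P
      = ∫ ω, ∑ i, (g ω * u ω i - c i) ^ 2 ∂P := by simp only [hgoal_pt]
    _ = ∑ i, ∫ ω, (g ω * u ω i - c i) ^ 2 ∂P :=
        integral_finset_sum _ (fun i _ => hIsq i)
    _ ≤ ∑ i, ∫ ω, (g ω * u ω i) ^ 2 ∂P := Finset.sum_le_sum fun i _ => hvar i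
    _ = ∫ ω, ∑ i, (g ω * u ω i) ^ 2 ∂P :=
        (integral_finset_sum _ (fun i _ => hIgu2 i)).symm
    _ ≤ ∫ ω, B ^ 2 * ∑ i, u ω i ^ 2 ∂P := by
        refine integral_mono_ae (integrable_finset_sum _ fun i _ => hIgu2 i)
          ((integrable_finset_sum _ fun i _ => hIu2 i).const_mul _) ?_
        filter_upwards [hXθ] with ω hθ
        have h1 : ∑ i, (g ω * u ω i) ^ 2 = g ω ^ 2 * ∑ i, u ω i ^ 2 := by
          rw [Finset.mul_sum]
          exact Finset.sum_congr rfl fun i _ => by ring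
        rw [h1]
        refine mul_le_mul_of_nonneg_right ?_ (Finset.sum_nonneg fun i _ => sq_nonneg _)
        calc g ω ^ 2 = |g ω| ^ 2 := (sq_abs _).symm
          _ ≤ B ^ 2 := pow_le_pow_left₀ (abs_nonneg _) hθ 2
    _ = B ^ 2 * Matrix.trace (covMatrix P X * (covMatrix P X + lam • 1)⁻¹) := by
        rw [integral_const_mul]
        congr 1
        rw [integral_finset_sum _ (fun i _ => hIu2 i)]
        simp only [hu2]
        exact htr
end
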